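/- arXiv:1407.6775 — 5 statements merged into one kernel-verified Lean document; each statement's English description precedes it below -/
import Mathlib

section
/- Let (h,B) be a quadratic Lie algebra over a field F of characteristic 0 and let D1, D2 be invertible skew-symmetric derivations of h. If the double extensions g1 and g2 of h by means of D1 and D2 are i-isomorphic, then there exist an invertible linear map Q : Z(h) → Z(h) and a nonzero λ ∈ F such that Q^{-1} ∘ (D1|_{Z(h)}) ∘ Q = λ · (D2|_{Z(h)}). In particular, D1|_{Z(h)} is diagonalizable if and only if D2|_{Z(h)} is diagonalizable. -/
open LinearMap Module

/-- `B` is invariant: `B([x,y],z) = B(x,[y,z])`. -/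
def LieInvariant {F : Type*} [Field F] {g : Type*} [LieRing g] [LieAlgebra F g]
    (B : LinearMap.BilinForm F g) : Prop :=
  ∀ x y z : g, B ⁅x, y⁆ z = B x ⁅y, z⁆

/-- `B` is symmetric. -/
def BilinSymm {F : Type*} [Field F] {g : Type*} [AddCommGroup g] [Module F g]
    (B : LinearMap.BilinForm F g) : Prop :=
  ∀ x y : g, B x y = B y x

/-- `(g, B)` is a quadratic Lie algebra: `B` nondegenerate, symmetric and invariant
(finite dimensionality is a separate hypothesis). -/
def IsQuadratic {F : Type*} [Field F] {g : Type*} [LieRing g] [LieAlgebra F g]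
    (B : LinearMap.BilinForm F g) : Prop :=
  B.Nondegenerate ∧ BilinSymm B ∧ LieInvariant B

/-- i-isomorphism of quadratic Lie algebras: a Lie algebra isomorphism which is an isometry. -/
def IIsom (F : Type*) [Field F] {g1 g2 : Type*} [LieRing g1] [LieAlgebra F g1]
    [LieRing g2] [LieAlgebra F g2] (B1 : LinearMap.BilinForm F g1)
    (B2 : LinearMap.BilinForm F g2) : Prop :=
  ∃ A : g1 ≃ₗ⁅F⁆ g2, ∀ x y : g1, B2 (A x) (A y) = B1 x y

/-- `D` is a skew-symmetric derivation of `(h, B)`. -/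
def IsSkewDerivation {F : Type*} [Field F] {h : Type*} [LieRing h] [LieAlgebra F h]
    (B : LinearMap.BilinForm F h) (D : h →ₗ[F] h) : Prop :=
  (∀ x y : h, D ⁅x, y⁆ = ⁅D x, y⁆ + ⁅x, D y⁆) ∧ ∀ x y : h, B (D x) y = - B x (D y)

/-- `(g, Bg)` is (a realization of) the double extension of `(h, Bh)` by means of the
skew-symmetric derivation `D`, via the embedding `ι : h → g` and the elements `e, f ∈ g`. -/
structure IsDoubleExtension {F : Type*} [Field F] {h g : Type*} [LieRing h] [LieAlgebra F h]
    [LieRing g] [LieAlgebra F g] (Bh : LinearMap.BilinForm F h) (Bg : LinearMap.BilinForm F g)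
    (D : h →ₗ[F] h) (ι : h →ₗ[F] g) (e f : g) : Prop where
  inj : Function.Injective ι
  spanning : ∀ x : g, ∃ (y : h) (a b : F), x = ι y + a • e + b • f
  bracket_h : ∀ x y : h, ⁅ι x, ι y⁆ = ι ⁅x, y⁆ + (Bh (D x) y) • f
  bracket_e : ∀ x : h, ⁅e, ι x⁆ = ι (D x)
  bracket_f : ∀ x : g, ⁅f, x⁆ = 0
  form_h : ∀ x y : h, Bg (ι x) (ι y) = Bh x y
  form_he : ∀ x : h, Bg (ι x) e = 0
  form_hf : ∀ x : h, Bg (ι x) f = 0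
  form_ee : Bg e e = 0
  form_ff : Bg f f = 0
  form_ef : Bg e f = 1

/-- `(g, B)` is decomposable: it contains a nonzero proper Lie ideal on which `B`
restricts nondegenerately. -/
def IsDecomposable (F : Type*) [Field F] {g : Type*} [LieRing g] [LieAlgebra F g]
    (B : LinearMap.BilinForm F g) : Prop :=
  ∃ I : LieIdeal F g, I ≠ ⊥ ∧ I ≠ ⊤ ∧ ∀ x ∈ I, (∀ y ∈ I, B x y = 0) → x = 0

/-- a linear endomorphism is diagonalizable if there is a basis of eigenvectors. -/
def IsDiagonalizable {F : Type*} [Field F] {M : Type*} [AddCommGroup M] [Module F M]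
    (f : M →ₗ[F] M) : Prop :=
  ∃ (n : ℕ) (b : Basis (Fin n) F M) (mu : Fin n → F), ∀ i, f (b i) = mu i • b i

/-- Auxiliary: diagonalizability transfers through a linear equivalence intertwining
the two endomorphisms up to a scalar. -/
lemma diag_transfer {F : Type*} [Field F] {M N : Type*} [AddCommGroup M] [Module F M]
    [AddCommGroup N] [Module F N] (e : N ≃ₗ[F] M) (f : M →ₗ[F] M) (g : N →ₗ[F] N) (c : F)
    (hrel : ∀ x : N, f (e x) = e (c • g x)) : IsDiagonalizable g → IsDiagonalizable f := by
  rintro ⟨n, b, mu, hb⟩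
  refine ⟨n, b.map e, fun i => c * mu i, fun i => ?_⟩
  simp only [Basis.map_apply]
  rw [hrel, hb i, smul_smul, map_smul]

/-- Corollary: if the double extensions of `(h,B)` by invertible
skew-symmetric derivations `D1, D2` are i-isomorphic, then `D1` and `D2` restricted to the
center of `h` agree up to conjugation and a nonzero multiple; in particular one restriction
is diagonalizable iff the other is. -/
theorem stmt_5 {F : Type*} [Field F] [CharZero F]
    {h : Type*} [LieRing h] [LieAlgebra F h] [Module.Finite F h]
    (Bh : LinearMap.BilinForm F h) (hq : IsQuadratic Bh)
    (D1 D2 : h →ₗ[F] h) (hD1 : IsSkewDerivation Bh D1) (hD2 : IsSkewDerivation Bh D2)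
    (hD1inv : Function.Bijective D1) (hD2inv : Function.Bijective D2)
    {g1 g2 : Type*} [LieRing g1] [LieAlgebra F g1] [LieRing g2] [LieAlgebra F g2]
    (Bg1 : LinearMap.BilinForm F g1) (Bg2 : LinearMap.BilinForm F g2)
    (ι1 : h →ₗ[F] g1) (e1 f1 : g1) (ι2 : h →ₗ[F] g2) (e2 f2 : g2)
    (hde1 : IsDoubleExtension Bh Bg1 D1 ι1 e1 f1)
    (hde2 : IsDoubleExtension Bh Bg2 D2 ι2 e2 f2)
    (hiso : IIsom F Bg1 Bg2) :
    ∃ (hZ1 : ∀ x ∈ LieSubmodule.toSubmodule (LieAlgebra.center F h),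
        D1 x ∈ LieSubmodule.toSubmodule (LieAlgebra.center F h))
      (hZ2 : ∀ x ∈ LieSubmodule.toSubmodule (LieAlgebra.center F h),
        D2 x ∈ LieSubmodule.toSubmodule (LieAlgebra.center F h))
      (lam : F)
      (Q : ↥(LieSubmodule.toSubmodule (LieAlgebra.center F h)) ≃ₗ[F]
        ↥(LieSubmodule.toSubmodule (LieAlgebra.center F h))),
      lam ≠ 0 ∧
      (∀ z, Q.symm (D1.restrict hZ1 (Q z)) = lam • D2.restrict hZ2 z) ∧
      (IsDiagonalizable (D1.restrict hZ1) ↔ IsDiagonalizable (D2.restrict hZ2)) := by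
  classical
  obtain ⟨hnd, hsym, _⟩ := hq
  have hcen : ∀ (D : h →ₗ[F] h), (∀ x y : h, D ⁅x, y⁆ = ⁅D x, y⁆ + ⁅x, D y⁆) →
      ∀ x ∈ LieSubmodule.toSubmodule (LieAlgebra.center F h),
        D x ∈ LieSubmodule.toSubmodule (LieAlgebra.center F h) := by
    intro D hD x hx
    rw [LieSubmodule.mem_toSubmodule, LieModule.mem_maxTrivSubmodule] at hx ⊢
    intro y
    have h1 := hD x y
    have h2 : ⁅x, y⁆ = (0 : h) := by rw [← lie_skew, hx y, neg_zero]
    have h3 : ⁅x, D y⁆ = (0 : h) := by rw [← lie_skew, hx (D y), neg_zero]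
    rw [h2, h3, map_zero] at h1
    have h4 : ⁅D x, y⁆ = 0 := by simpa using h1.symm
    rw [← lie_skew, h4, neg_zero]
  have hZ1 := hcen D1 hD1.1
  have hZ2 := hcen D2 hD2.1
  by_cases hsub : Subsingleton h
  · refine ⟨hZ1, hZ2, 1, LinearEquiv.refl F _, one_ne_zero,
      fun z => Subsingleton.elim _ _, ?_⟩
    constructor <;> intro _ <;>
      exact ⟨0, Basis.empty _, Fin.elim0, fun i => i.elim0⟩
  haveI : Nontrivial h := not_subsingleton_iff_nontrivial.mp hsub
  obtain ⟨A, hA⟩ := hiso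
  have hAcoe : ∀ x : g1, A.toLinearEquiv x = A x := fun x => rfl
  have hA0 : A (0 : g1) = 0 := by rw [← hAcoe]; exact map_zero _
  have hAinj : Function.Injective A := by
    intro a b hab
    exact A.toLinearEquiv.injective (by rw [hAcoe, hAcoe]; exact hab)
  have hAzero : ∀ x : g1, A x = 0 → x = 0 := fun x hx => hAinj (hx.trans hA0.symm)
  have hAadd : ∀ x y : g1, A (x + y) = A x + A y := fun x y => by
    rw [← hAcoe, ← hAcoe, ← hAcoe]; exact map_add _ _ _
  have hAsmul : ∀ (a : F) (x : g1), A (a • x) = a • A x := fun a x => by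
    rw [← hAcoe, ← hAcoe]; exact map_smul _ _ _
  -- f2 is central in g2
  have hf2c : ∀ u : g2, ⁅u, f2⁆ = 0 := fun u => by
    rw [← lie_skew, hde2.bracket_f, neg_zero]
  have hf1c : ∀ u : g1, ⁅u, f1⁆ = 0 := fun u => by
    rw [← lie_skew, hde1.bracket_f, neg_zero]
  -- A f1 is central in g2
  have hAf1c : ∀ u : g2, ⁅A f1, u⁆ = 0 := by
    intro u
    have : ⁅A f1, A (A.symm u)⁆ = A ⁅f1, A.symm u⁆ := (LieHom.map_lie _ _ _).symm
    rw [A.apply_symm_apply] at this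
    rw [this, hde1.bracket_f, hA0]
  -- central elements of g2 are multiples of f2
  have hZg2 : ∀ u : g2, (∀ v : g2, ⁅u, v⁆ = 0) → ∃ b : F, u = b • f2 := by
    intro u hu
    obtain ⟨y, a, b, rfl⟩ := hde2.spanning u
    have h1 := hu e2
    rw [add_lie, add_lie, smul_lie, smul_lie, lie_self, hde2.bracket_f, ← lie_skew,
      hde2.bracket_e] at h1
    have hy : y = 0 := by
      apply hD2inv.injective
      rw [map_zero]
      apply hde2.inj
      rw [map_zero]
      simpa using h1
    obtain ⟨x0, hx0⟩ := exists_ne (0 : h)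
    have h2 := hu (ι2 x0)
    rw [hy, map_zero, zero_add, add_lie, smul_lie, smul_lie, hde2.bracket_f,
      hde2.bracket_e, smul_zero, add_zero] at h2
    have ha : a = 0 := by
      rcases smul_eq_zero.mp h2 with ha | hz
      · exact ha
      · exfalso
        apply hx0
        apply hD2inv.injective
        rw [map_zero]
        apply hde2.inj
        rw [map_zero]
        exact hz
    exact ⟨b, by rw [hy, ha, map_zero, zero_add, zero_smul, zero_add]⟩
  obtain ⟨mu, hmu⟩ := hZg2 (A f1) hAf1c
  have hf1 : f1 ≠ 0 := by
    intro hf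
    have := hde1.form_ef
    rw [hf, map_zero] at this
    exact one_ne_zero this.symm
  have hmu0 : mu ≠ 0 := by
    intro hm
    rw [hm, zero_smul] at hmu
    exact hf1 (hAzero _ hmu)
  -- the projection g2 → h
  haveI : FiniteDimensional F h := ‹Module.Finite F h›
  set td := LinearMap.BilinForm.toDual Bh hnd with htd
  set p2 : g2 →ₗ[F] h := td.symm.toLinearMap ∘ₗ ι2.dualMap ∘ₗ Bg2.flip with hp2def
  have hp2 : ∀ (u : g2) (y : h), (∀ v : h, Bg2 (ι2 v) u = Bh y v) → p2 u = y := by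
    intro u y hy
    have key : ∀ v, Bh (p2 u) v = Bg2 (ι2 v) u := by
      intro v
      rw [hp2def]
      simp only [LinearMap.coe_comp, Function.comp_apply, LinearEquiv.coe_coe]
      exact LinearMap.BilinForm.apply_toDual_symm_apply _ _
    have hz : ∀ v, Bh (p2 u - y) v = 0 := by
      intro v
      rw [map_sub, LinearMap.sub_apply, key v, hy v, sub_self]
    have := hnd.1 _ hz
    rwa [sub_eq_zero] at this
  have hpι : ∀ y : h, p2 (ι2 y) = y := fun y =>
    hp2 _ _ fun v => (hde2.form_h v y).trans (hsym v y)
  have hpe : p2 e2 = 0 := hp2 _ _ fun v => by rw [hde2.form_he, map_zero, LinearMap.zero_apply]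
  have hpf : p2 f2 = 0 := hp2 _ _ fun v => by rw [hde2.form_hf, map_zero, LinearMap.zero_apply]
  -- the induced map φ : h → h
  set φ : h →ₗ[F] h := p2 ∘ₗ (A.toLinearEquiv.toLinearMap ∘ₗ ι1) with hφdef
  have hφ : ∀ x : h, φ x = p2 (A (ι1 x)) := fun x => rfl
  -- decomposition of A (ι1 x)
  have hdec : ∀ x : h, ∃ b : F, A (ι1 x) = ι2 (φ x) + b • f2 := by
    intro x
    obtain ⟨y, a, b, hx⟩ := hde2.spanning (A (ι1 x))
    have hBf : Bg2 (A (ι1 x)) f2 = 0 := by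
      have h1 : Bg2 (A (ι1 x)) (A f1) = 0 := (hA _ _).trans (hde1.form_hf x)
      rw [hmu, map_smul, smul_eq_mul] at h1
      exact (mul_eq_zero.mp h1).resolve_left hmu0
    have ha : a = 0 := by
      rw [hx] at hBf
      simpa [hde2.form_hf, hde2.form_ef, hde2.form_ff] using hBf
    have hy : φ x = y := by
      rw [hφ, hx, map_add, map_add, map_smul, map_smul, hpι, hpe, hpf, smul_zero,
        smul_zero, add_zero, add_zero]
    exact ⟨b, by rw [hx, ha, hy, zero_smul, add_zero]⟩
  -- φ is a Lie algebra map
  have hφlie : ∀ x y : h, φ ⁅x, y⁆ = ⁅φ x, φ y⁆ := by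
    intro x y
    obtain ⟨bx, hbx⟩ := hdec x
    obtain ⟨by', hby⟩ := hdec y
    have h1 : A ⁅ι1 x, ι1 y⁆ = ⁅A (ι1 x), A (ι1 y)⁆ := LieHom.map_lie _ _ _
    rw [hde1.bracket_h, hbx, hby, hAadd, hAsmul, hmu] at h1
    have h2 : ⁅ι2 (φ x) + bx • f2, ι2 (φ y) + by' • f2⁆
        = ι2 ⁅φ x, φ y⁆ + (Bh (D1 x) y) • (mu • f2) - (Bh (D1 x) y) • (mu • f2)
          + (Bh (D2 (φ x)) (φ y)) • f2 := by
      rw [add_lie, lie_add, lie_add, smul_lie, lie_smul, lie_smul, hde2.bracket_f,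
        hf2c, hf2c, hde2.bracket_h]
      module
    rw [h2] at h1
    have h3 := congrArg p2 h1
    simpa [map_add, map_sub, map_smul, hpf, hpι, hφ, smul_zero] using h3
  -- φ is injective (hence bijective)
  have hφinj : Function.Injective φ := by
    rw [injective_iff_map_eq_zero]
    intro x hx0
    obtain ⟨b, hb⟩ := hdec x
    rw [hx0, map_zero, zero_add] at hb
    have h1 : A ⁅e1, ι1 x⁆ = ⁅A e1, A (ι1 x)⁆ := LieHom.map_lie _ _ _
    rw [hde1.bracket_e, hb, lie_smul, hf2c, smul_zero] at h1
    have h2 : ι1 (D1 x) = 0 := hAzero _ h1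
    have h3 : D1 x = 0 := hde1.inj (by rw [map_zero]; exact h2)
    exact hD1inv.injective (by rw [map_zero]; exact h3)
  have hφbij : Function.Bijective φ :=
    ⟨hφinj, LinearMap.injective_iff_surjective.mp hφinj⟩
  -- φ preserves the center
  have hφZ : ∀ x ∈ LieSubmodule.toSubmodule (LieAlgebra.center F h),
      φ x ∈ LieSubmodule.toSubmodule (LieAlgebra.center F h) := by
    intro x hx
    rw [LieSubmodule.mem_toSubmodule, LieModule.mem_maxTrivSubmodule] at hx ⊢
    intro y
    obtain ⟨y', rfl⟩ := hφbij.2 y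
    rw [← hφlie]
    have : ⁅y', x⁆ = (0 : h) := hx y'
    rw [this, map_zero]
  -- decomposition of A e1
  obtain ⟨w, c, d, hAe⟩ := hde2.spanning (A e1)
  have hc1 : mu * c = 1 := by
    have h1 : Bg2 (A e1) (A f1) = 1 := (hA e1 f1).trans hde1.form_ef
    rw [hmu, hAe] at h1
    simp only [map_smul, map_add, LinearMap.add_apply, LinearMap.smul_apply,
      hde2.form_hf, hde2.form_ef, hde2.form_ff, smul_eq_mul] at h1
    rw [← h1]
    ring
  have hc0 : c ≠ 0 := by
    intro hc
    rw [hc, mul_zero] at hc1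
    exact zero_ne_one hc1
  -- the key intertwining relation on the center
  have hkey : ∀ z : h, z ∈ LieSubmodule.toSubmodule (LieAlgebra.center F h) →
      φ (D1 z) = c • D2 (φ z) := by
    intro z hz
    have hφz := hφZ z hz
    rw [LieSubmodule.mem_toSubmodule, LieModule.mem_maxTrivSubmodule] at hφz
    have hwz : ⁅w, φ z⁆ = (0 : h) := hφz w
    obtain ⟨bz, hbz⟩ := hdec z
    have h1 : A ⁅e1, ι1 z⁆ = ⁅A e1, A (ι1 z)⁆ := LieHom.map_lie _ _ _
    rw [hde1.bracket_e, hAe, hbz] at h1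
    have h2 : ⁅ι2 w + c • e2 + d • f2, ι2 (φ z) + bz • f2⁆
        = (Bh (D2 w) (φ z)) • f2 + c • ι2 (D2 (φ z)) := by
      simp only [add_lie, lie_add, smul_lie, lie_smul, hde2.bracket_h, hde2.bracket_e,
        hde2.bracket_f, hf2c, hwz, map_zero, smul_zero, zero_smul, zero_add, add_zero,
        zero_lie, lie_zero]
    rw [h2] at h1
    have h3 := congrArg p2 h1
    simpa [map_add, map_smul, hpf, hpι, hφ, smul_zero] using h3
  -- restrict φ to the center
  set φZ : ↥(LieSubmodule.toSubmodule (LieAlgebra.center F h)) →ₗ[F]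
      ↥(LieSubmodule.toSubmodule (LieAlgebra.center F h)) := φ.restrict hφZ with hφZdef
  have hφZc : ∀ z, (φZ z : h) = φ (z : h) := fun z => rfl
  have hφZinj : Function.Injective φZ := by
    intro a b hab
    exact Subtype.ext (hφinj (by rw [← hφZc, ← hφZc, hab]))
  set ψ : ↥(LieSubmodule.toSubmodule (LieAlgebra.center F h)) ≃ₗ[F]
      ↥(LieSubmodule.toSubmodule (LieAlgebra.center F h)) :=
    LinearEquiv.ofBijective φZ ⟨hφZinj, LinearMap.injective_iff_surjective.mp hφZinj⟩
    with hψdef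
  have hψc : ∀ z, (ψ z : h) = φ (z : h) := fun z => rfl
  have Qrel : ∀ z, ψ (D1.restrict hZ1 (ψ.symm z)) = c • D2.restrict hZ2 z := by
    intro z
    apply Subtype.ext
    have hwz : φ ((ψ.symm z : h)) = (z : h) := by
      rw [← hψc]
      exact congrArg Subtype.val (ψ.apply_symm_apply z)
    rw [hψc, LinearMap.restrict_coe_apply]
    rw [hkey _ (ψ.symm z).2, hwz]
    rfl
  refine ⟨hZ1, hZ2, c, ψ.symm, hc0, ?_, ?_⟩
  · intro z
    rw [LinearEquiv.symm_symm]
    exact Qrel z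
  · constructor
    · intro hd1
      refine diag_transfer ψ (D2.restrict hZ2) (D1.restrict hZ1) c⁻¹ ?_ hd1
      intro x
      have := Qrel (ψ x)
      rw [ψ.symm_apply_apply] at this
      rw [map_smul, this, smul_smul, inv_mul_cancel₀ hc0, one_smul]
    · intro hd2
      refine diag_transfer ψ.symm (D1.restrict hZ1) (D2.restrict hZ2) c ?_ hd2
      intro x
      have := Qrel x
      rw [← this, ψ.symm_apply_apply]
end

section
/- Every solvable quadratic Lie algebra (g,B) of dimension n ≤ 3 over an algebraically closed field F of characteristic 0 is abelian, hence i-isomorphic to F^n with a nondegenerate symmetric bilinear form. -/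
open LinearMap Module

section Part1
variable {F : Type*} [Field F] {g : Type*} [LieRing g] [LieAlgebra F g] [Module.Finite F g]

/-- If `Z` has codimension at most 2, extract two vectors spanning a complement. -/
private lemma exists_pair_compl (Z : Submodule F g) {k : ℕ} (hk : k ≤ 2)
    (h2 : finrank F g ≤ finrank F Z + k) :
    ∃ v : Fin 2 → g, (k ≤ 1 → v 1 = 0) ∧
      ∀ a : g, ∃ z ∈ Z, ∃ c1 c2 : F, a = z + c1 • v 0 + c2 • v 1 := by
  obtain ⟨W, hW⟩ := Submodule.exists_isCompl Z
  have hdim : finrank F Z + finrank F W = finrank F g :=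
    Submodule.finrank_add_eq_of_isCompl hW
  have hWk : finrank F W ≤ k := by omega
  set m := finrank F W with hm
  let b : Basis (Fin m) F W := Module.finBasis F W
  refine ⟨fun i => if h : (i : ℕ) < m then (b ⟨i, h⟩ : g) else 0, ?_, ?_⟩
  · intro hk1
    have : ¬ (1 < m) := by omega
    simp [this]
  · intro a
    have ha : a ∈ Z ⊔ W := by rw [hW.sup_eq_top]; exact Submodule.mem_top
    obtain ⟨z, hz, w, hw, rfl⟩ := Submodule.mem_sup.mp ha
    have hwspan : w ∈ Submodule.span F
        {(if h : (0:ℕ) < m then (b ⟨0, h⟩ : g) else 0),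
         (if h : (1:ℕ) < m then (b ⟨1, h⟩ : g) else 0)} := by
      have : w ∈ Submodule.map W.subtype ⊤ := by
        simp [Submodule.map_subtype_top]; exact hw
      rw [← b.span_eq, Submodule.map_span] at this
      refine Submodule.span_mono ?_ this
      rintro x ⟨y, ⟨j, rfl⟩, rfl⟩
      have hj2 : (j : ℕ) < 2 := lt_of_lt_of_le j.2 (hWk.trans hk)
      rcases (by omega : (j:ℕ) = 0 ∨ (j:ℕ) = 1) with h0 | h1
      · have h0m : (0:ℕ) < m := h0 ▸ j.2
        have hj : j = ⟨0, h0m⟩ := by ext; exact h0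
        left
        rw [dif_pos h0m, hj]; rfl
      · have h1m : (1:ℕ) < m := h1 ▸ j.2
        have hj : j = ⟨1, h1m⟩ := by ext; exact h1
        right
        rw [Set.mem_singleton_iff, dif_pos h1m, hj]; rfl
    obtain ⟨c1, c2, hc⟩ := Submodule.mem_span_pair.mp hwspan
    exact ⟨z, hz, c1, c2, by rw [← hc]; abel⟩

end Part1

private lemma abelian_aux {F : Type*} [Field F]
    {g : Type*} [LieRing g] [LieAlgebra F g] [Module.Finite F g]
    (B : LinearMap.BilinForm F g) (hnd : B.Nondegenerate)
    (hsy : ∀ x y : g, B x y = B y x)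
    (hinv : ∀ x y z : g, B ⁅x, y⁆ z = B x ⁅y, z⁆)
    (hsol : LieAlgebra.IsSolvable g) (hdim : finrank F g ≤ 3) :
    IsLieAbelian g := by
  rcases subsingleton_or_nontrivial g with h | h
  · exact ⟨fun x y => Subsingleton.elim _ _⟩
  set C : LieSubmodule F g g := LieAlgebra.derivedSeries F g 1 with hCdef
  have hC1 : C = ⁅(⊤ : LieIdeal F g), (⊤ : LieIdeal F g)⁆ := by
    rw [hCdef, LieAlgebra.derivedSeries_def, LieAlgebra.derivedSeriesOfIdeal_succ,
      LieAlgebra.derivedSeriesOfIdeal_zero]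
  have hmem : ∀ x y : g, ⁅x, y⁆ ∈ C := fun x y =>
    hC1 ▸ LieSubmodule.lie_mem_lie (LieSubmodule.mem_top x) (LieSubmodule.mem_top y)
  set Cs : Submodule F g := (C : Submodule F g) with hCs
  have hCspan : Cs = Submodule.span F
      {m | ∃ x ∈ (⊤ : LieIdeal F g), ∃ n ∈ (⊤ : LieIdeal F g), ⁅x, n⁆ = m} := by
    rw [hCs, hC1]; exact LieSubmodule.lieIdeal_oper_eq_linear_span' ..
  set Z : Submodule F g := B.orthogonal Cs with hZ
  have hZ_central : ∀ z ∈ Z, ∀ y : g, ⁅z, y⁆ = 0 := by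
    intro z hz y
    have h1 : ∀ x : g, B x ⁅y, z⁆ = 0 := fun x => by
      rw [← hinv]
      exact hz ⁅x, y⁆ (hmem x y)
    have h2 : ⁅y, z⁆ = 0 := hnd.1 _ fun n => (hsy _ n).symm ▸ h1 n
    rw [← lie_skew, h2, neg_zero]
  have hrefl : B.IsRefl := fun x y hxy => by rw [hsy y x]; exact hxy
  have hZdim : finrank F Z = finrank F g - finrank F Cs :=
    LinearMap.BilinForm.finrank_orthogonal hnd Cs
  have hCle : finrank F Cs ≤ finrank F g := Submodule.finrank_le _
  -- key step
  have step : ∀ k ≤ 2, finrank F Cs ≤ k →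
      ∃ v : Fin 2 → g, (k ≤ 1 → v 1 = 0) ∧ Cs ≤ F ∙ ⁅v 0, v 1⁆ := by
    intro k hk hCk
    obtain ⟨v, hv1, hdec⟩ := exists_pair_compl Z hk (by omega)
    refine ⟨v, hv1, ?_⟩
    rw [hCspan]
    apply Submodule.span_le.mpr
    rintro _ ⟨x, -, y, -, rfl⟩
    obtain ⟨z, hz, c1, c2, rfl⟩ := hdec x
    obtain ⟨z', hz', d1, d2, rfl⟩ := hdec y
    have hz0 : ∀ w : g, ⁅z, w⁆ = 0 := hZ_central z hz
    have hz'0 : ∀ w : g, ⁅w, z'⁆ = 0 := fun w => by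
      rw [← lie_skew, hZ_central z' hz' w, neg_zero]
    have e : ⁅z + c1 • v 0 + c2 • v 1, z' + d1 • v 0 + d2 • v 1⁆
        = (c1 * d2 - c2 * d1) • ⁅v 0, v 1⁆ := by
      have hskew : ⁅v 1, v 0⁆ = -⁅v 0, v 1⁆ := (lie_skew (v 1) (v 0)).symm ▸ rfl
      simp only [lie_add, add_lie, lie_smul, smul_lie, hz0, hz'0, smul_zero, zero_add,
        add_zero, lie_self, smul_smul, hskew]
      module
    rw [SetLike.mem_coe, e]
    exact Submodule.smul_mem _ _ (Submodule.mem_span_singleton_self _)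
  have hspan1 : ∀ x : g, finrank F (F ∙ x) ≤ 1 := by
    intro x
    by_cases hx : x = 0
    · rw [hx, Submodule.span_zero_singleton]; simp
    · rw [finrank_span_singleton hx]
  -- derived algebra is proper
  have hCtop : C < ⊤ := by haveI := hsol; exact hCdef ▸ LieAlgebra.derivedSeries_lt_top_of_solvable F g
  have hCsne : Cs ≠ ⊤ := fun hc => hCtop.ne ((LieSubmodule.toSubmodule_eq_top (N := C)).mp hc)
  have hm2 : finrank F Cs ≤ 2 := by
    have : finrank F Cs < finrank F g := Submodule.finrank_lt hCsne
    omega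
  obtain ⟨v, -, hCv⟩ := step 2 le_rfl hm2
  have hm1 : finrank F Cs ≤ 1 := (Submodule.finrank_mono hCv).trans (hspan1 _)
  obtain ⟨w, hw1, hCw⟩ := step 1 (by omega) hm1
  rw [hw1 le_rfl, lie_zero, Submodule.span_zero_singleton, le_bot_iff] at hCw
  constructor
  intro x y
  have hxy : ⁅x, y⁆ ∈ Cs := (LieSubmodule.mem_toSubmodule C).mpr (hmem x y)
  rw [hCw] at hxy
  simpa using hxy


private lemma orthonormal_aux {F : Type*} [Field F] [IsAlgClosed F] [CharZero F]
    {g : Type*} [AddCommGroup g] [Module F g] [Module.Finite F g]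
    (B : LinearMap.BilinForm F g) (hnd : B.Nondegenerate)
    (hsy : ∀ x y : g, B x y = B y x) :
    ∃ b : Basis (Fin (finrank F g)) F g,
        ∀ i j, B (b i) (b j) = if i = j then 1 else 0 := by
  have h2 : Invertible (2 : F) := invertibleOfNonzero two_ne_zero
  have hsymm : B.IsSymm := ⟨fun x y => by simpa using hsy x y⟩
  obtain ⟨v, hv⟩ := LinearMap.BilinForm.exists_orthogonal_basis (LinearMap.BilinForm.isSymm_iff.mp hsymm)
  have hdiag : ∀ i, B (v i) (v i) ≠ 0 := by
    intro i h0
    have hall : ∀ x, B (v i) x = 0 := by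
      have : (B (v i) : g →ₗ[F] F) = 0 := by
        apply v.ext
        intro j
        by_cases hij : i = j
        · subst hij; simpa using h0
        · simpa using hv hij
      intro x; rw [this]; simp
    exact (v.ne_zero i) (hnd.1 _ hall)
  choose c hc using fun i => IsAlgClosed.exists_pow_nat_eq (B (v i) (v i)) (n := 2) two_pos
  have hcne : ∀ i, c i ≠ 0 := by
    intro i h0; apply hdiag i; rw [← hc i, h0]; ring
  set u : Fin (finrank F g) → Fˣ := fun i => (Units.mk0 (c i) (hcne i))⁻¹ with hu
  refine ⟨v.unitsSMul u, fun i j => ?_⟩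
  rw [Basis.unitsSMul_apply, Basis.unitsSMul_apply]
  by_cases hij : i = j
  · subst hij
    simp only [if_pos rfl, Units.smul_def, map_smul, LinearMap.smul_apply, smul_eq_mul, hu,
      Units.val_inv_eq_inv_val, Units.val_mk0]
    rw [← hc i]
    field_simp
    rw [if_pos trivial]; exact div_self (hcne i)
  · have h0 : B (v i) (v j) = 0 := hv hij
    simp [Units.smul_def, hij, h0]


/-- every solvable quadratic Lie algebra of dimension ≤ 3 over an
algebraically closed field of characteristic 0 is abelian, hence i-isomorphic to `F^n`
with a nondegenerate symmetric bilinear form. -/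
theorem stmt_7 {F : Type*} [Field F] [IsAlgClosed F] [CharZero F]
    {g : Type*} [LieRing g] [LieAlgebra F g] [Module.Finite F g]
    (B : LinearMap.BilinForm F g) (hq : IsQuadratic B)
    (hsol : LieAlgebra.IsSolvable g) (hdim : finrank F g ≤ 3) :
    IsLieAbelian g ∧
      ∃ b : Basis (Fin (finrank F g)) F g,
        ∀ i j, B (b i) (b j) = if i = j then 1 else 0 := by
  obtain ⟨hnd, hsy, hinv⟩ := hq
  exact ⟨abelian_aux B hnd hsy hinv hsol hdim, orthonormal_aux B hnd hsy⟩
end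

section
/- Every solvable quadratic Lie algebra (g,B) of dimension 4 over an algebraically closed field F of characteristic 0 is either abelian (i-isomorphic to F^4) or i-isomorphic to the diamond Lie algebra g4. -/
open LinearMap Module

/-- the diamond Lie algebra g4, basis {X,P,Q,Z} -/
def IsG4 (F : Type*) [Field F] (g : Type*) [LieRing g] [LieAlgebra F g]
    (B : LinearMap.BilinForm F g) : Prop :=
  ∃ b : Basis (Fin 4) F g,
    (⁅b 0, b 1⁆ = b 1) ∧
    (⁅b 0, b 2⁆ = -(b 2)) ∧
    (⁅b 0, b 3⁆ = 0) ∧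
    (⁅b 1, b 2⁆ = b 3) ∧
    (⁅b 1, b 3⁆ = 0) ∧
    (⁅b 2, b 3⁆ = 0) ∧
    (B (b 0) (b 0) = 0) ∧
    (B (b 0) (b 1) = 0) ∧
    (B (b 0) (b 2) = 0) ∧
    (B (b 0) (b 3) = 1) ∧
    (B (b 1) (b 0) = 0) ∧
    (B (b 1) (b 1) = 0) ∧
    (B (b 1) (b 2) = 1) ∧
    (B (b 1) (b 3) = 0) ∧
    (B (b 2) (b 0) = 0) ∧
    (B (b 2) (b 1) = 1) ∧
    (B (b 2) (b 2) = 0) ∧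
    (B (b 2) (b 3) = 0) ∧
    (B (b 3) (b 0) = 1) ∧
    (B (b 3) (b 1) = 0) ∧
    (B (b 3) (b 2) = 0) ∧
    (B (b 3) (b 3) = 0)


lemma exists_orthonormal_basis4 {F : Type*} [Field F] [IsAlgClosed F] [CharZero F]
    {g : Type*} [AddCommGroup g] [Module F g] [Module.Finite F g]
    (B : LinearMap.BilinForm F g) (hnd : B.Nondegenerate)
    (hsym : ∀ x y, B x y = B y x) (hdim : finrank F g = 4) :
    ∃ b : Basis (Fin 4) F g, ∀ i j, B (b i) (b j) = if i = j then 1 else 0 := by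
  haveI : Invertible (2 : F) := invertibleOfNonzero two_ne_zero
  have hsy : B.IsSymm := ⟨fun x y => hsym x y⟩
  obtain ⟨v, hv⟩ := LinearMap.BilinForm.exists_orthogonal_basis (LinearMap.BilinForm.isSymm_iff.mp hsy)
  have hdne : ∀ i, B (v i) (v i) ≠ 0 := by
    intro i hzero
    have : v i = 0 := by
      apply hnd.1
      intro y
      have hy := v.sum_repr y
      rw [← hy, map_sum]
      refine Finset.sum_eq_zero fun j _ => ?_
      rw [map_smul]
      rcases eq_or_ne i j with rfl | hij
      · simp [hzero]
      · rw [show (B (v i)) (v j) = 0 from hv hij, smul_zero]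
    exact v.ne_zero i this
  choose s hs using fun i => IsAlgClosed.exists_pow_nat_eq (B (v i) (v i)) (n := 2) (by norm_num)
  have hsne : ∀ i, s i ≠ 0 := by
    intro i h
    apply hdne i
    rw [← hs i, h]; ring
  let u : Fin (finrank F g) → Fˣ := fun i => Units.mk0 (s i)⁻¹ (inv_ne_zero (hsne i))
  let w := v.unitsSMul u
  have hw : ∀ i j, B (w i) (w j) = if i = j then 1 else 0 := by
    intro i j
    have hwv : ∀ k, w k = (s k)⁻¹ • v k := fun k => by
      simp [w, Basis.unitsSMul_apply, Units.smul_def, u]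
    rw [hwv, hwv, map_smul, map_smul]
    rcases eq_or_ne i j with rfl | hij
    · simp only [if_pos rfl, smul_eq_mul]
      field_simp
      rw [LinearMap.smul_apply, ← hs i, if_pos trivial, smul_eq_mul]
      field_simp
      exact div_self (hsne i)
    · have h0 : (B (v i)) (v j) = 0 := hv hij
      simp [if_neg hij, h0]
  refine ⟨w.reindex (finCongr hdim), fun i j => ?_⟩
  rw [Module.Basis.reindex_apply, Module.Basis.reindex_apply, hw]
  simp [Fin.ext_iff]


lemma eq_zero_of_eq_neg' {F : Type*} [Field F] [CharZero F] {x : F} (h : x = -x) : x = 0 := by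
  have h2 : x + x = 0 := by nth_rewrite 2 [h]; ring
  rw [← two_mul] at h2
  rcases mul_eq_zero.mp h2 with h3 | h3
  · exact absurd h3 two_ne_zero
  · exact h3

lemma indep4 {F : Type*} [Field F] {g : Type*} [AddCommGroup g] [Module F g]
    (B : LinearMap.BilinForm F g) (hsym : ∀ x y, B x y = B y x)
    (e p q z : g)
    (f1 : B e e = 0) (f2 : B e p = 0) (f3 : B e q = 0) (f4 : B e z = 1)
    (f5 : B p p = 0) (f6 : B p q = 1) (f7 : B p z = 0)
    (f8 : B q q = 0) (f9 : B q z = 0) (f10 : B z z = 0) :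
    LinearIndependent F ![e, p, q, z] := by
  have g2 : B p e = 0 := by rw [hsym]; exact f2
  have g3 : B q e = 0 := by rw [hsym]; exact f3
  have g4 : B z e = 1 := by rw [hsym]; exact f4
  have g6 : B q p = 1 := by rw [hsym]; exact f6
  have g7 : B z p = 0 := by rw [hsym]; exact f7
  have g9 : B z q = 0 := by rw [hsym]; exact f9
  rw [Fintype.linearIndependent_iff]
  intro c hc
  have hc' : c 0 • e + c 1 • p + c 2 • q + c 3 • z = 0 := by
    have := hc
    simpa [Fin.sum_univ_four, add_assoc] using this
  have key : ∀ w : g, c 0 * B e w + c 1 * B p w + c 2 * B q w + c 3 * B z w = 0 := by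
    intro w
    have : B (c 0 • e + c 1 • p + c 2 • q + c 3 • z) w = 0 := by rw [hc']; simp
    simpa [map_add, map_smul, LinearMap.add_apply, LinearMap.smul_apply, smul_eq_mul] using this
  have h0 := key z; have h1 := key q; have h2 := key p; have h3 := key e
  rw [f4, f7, f9, f10] at h0
  rw [f3, f6, f8, g9] at h1
  rw [f2, f5, g6, g7] at h2
  rw [f1, g2, g3, g4] at h3
  simp only [mul_one, mul_zero, zero_add, add_zero] at h0 h1 h2 h3
  intro i
  fin_cases i
  exacts [h0, h1, h2, h3]

lemma vanish4 {F : Type*} [Field F] {g : Type*} [AddCommGroup g] [Module F g] [Module.Finite F g]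
    (B : LinearMap.BilinForm F g) (hnd : B.Nondegenerate) (hsym : ∀ x y, B x y = B y x)
    (hdim : finrank F g = 4) (e p q z : g)
    (f1 : B e e = 0) (f2 : B e p = 0) (f3 : B e q = 0) (f4 : B e z = 1)
    (f5 : B p p = 0) (f6 : B p q = 1) (f7 : B p z = 0)
    (f8 : B q q = 0) (f9 : B q z = 0) (f10 : B z z = 0) :
    ∀ x : g, B x e = 0 → B x p = 0 → B x q = 0 → B x z = 0 → x = 0 := by
  have hind := indep4 B hsym e p q z f1 f2 f3 f4 f5 f6 f7 f8 f9 f10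
  have hcard : Fintype.card (Fin 4) = finrank F g := by simp [hdim]
  let b := basisOfLinearIndependentOfCardEqFinrank hind hcard
  have hco : ⇑b = ![e, p, q, z] := coe_basisOfLinearIndependentOfCardEqFinrank hind hcard
  have hb0 : b 0 = e := by simp [hco]
  have hb1 : b 1 = p := by simp [hco]
  have hb2 : b 2 = q := by simp [hco]
  have hb3 : b 3 = z := by simp [hco]
  intro x h1 h2 h3 h4
  have hz : ∀ i, B x (b i) = 0 := by
    intro i; rw [hco]; fin_cases i <;> simp [h1, h2, h3, h4]
  apply hnd.1
  intro y
  have hy : B x y = B x (∑ i, b.repr y i • b i) := by rw [b.sum_repr y]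
  rw [hy, map_sum]
  apply Finset.sum_eq_zero
  intro i _
  rw [map_smul, hz i, smul_zero]

lemma g4_of_quadruple {F : Type*} [Field F] {g : Type*} [LieRing g] [LieAlgebra F g]
    [Module.Finite F g]
    (B : LinearMap.BilinForm F g) (hsym : ∀ x y, B x y = B y x) (hdim : finrank F g = 4)
    (e p q z : g)
    (h1 : ⁅e, p⁆ = p) (h2 : ⁅e, q⁆ = -q) (h3 : ⁅e, z⁆ = 0)
    (h4 : ⁅p, q⁆ = z) (h5 : ⁅p, z⁆ = 0) (h6 : ⁅q, z⁆ = 0)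
    (f1 : B e e = 0) (f2 : B e p = 0) (f3 : B e q = 0) (f4 : B e z = 1)
    (f5 : B p p = 0) (f6 : B p q = 1) (f7 : B p z = 0)
    (f8 : B q q = 0) (f9 : B q z = 0) (f10 : B z z = 0) :
    IsG4 F g B := by
  have hind := indep4 B hsym e p q z f1 f2 f3 f4 f5 f6 f7 f8 f9 f10
  have hcard : Fintype.card (Fin 4) = finrank F g := by simp [hdim]
  refine ⟨basisOfLinearIndependentOfCardEqFinrank hind hcard, ?_⟩
  have hco : ⇑(basisOfLinearIndependentOfCardEqFinrank hind hcard) = ![e, p, q, z] :=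
    coe_basisOfLinearIndependentOfCardEqFinrank hind hcard
  have hb0 : basisOfLinearIndependentOfCardEqFinrank hind hcard 0 = e := by simp [hco]
  have hb1 : basisOfLinearIndependentOfCardEqFinrank hind hcard 1 = p := by simp [hco]
  have hb2 : basisOfLinearIndependentOfCardEqFinrank hind hcard 2 = q := by simp [hco]
  have hb3 : basisOfLinearIndependentOfCardEqFinrank hind hcard 3 = z := by simp [hco]
  rw [hb0, hb1, hb2, hb3]
  refine ⟨h1, h2, h3, h4, h5, h6, f1, f2, f3, f4, ?_, ?_, f6, f7, ?_, ?_, f8, f9, ?_, ?_, ?_, f10⟩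
  · rw [hsym]; exact f2
  · exact f5
  · rw [hsym]; exact f3
  · rw [hsym]; exact f6
  · rw [hsym]; exact f4
  · rw [hsym]; exact f7
  · rw [hsym]; exact f9

lemma aux_not_solvable {F : Type*} [Field F] {g : Type*} [LieRing g] [LieAlgebra F g]
    (h1 : ⁅LieAlgebra.derivedSeries F g 1, LieAlgebra.derivedSeries F g 1⁆ =
      LieAlgebra.derivedSeries F g 1)
    (h2 : LieAlgebra.derivedSeries F g 1 ≠ ⊥) : ¬ LieAlgebra.IsSolvable g := by
  intro hs
  have key : ∀ k, LieAlgebra.derivedSeries F g (k + 1) = LieAlgebra.derivedSeries F g 1 := by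
    intro k
    induction k with
    | zero => rfl
    | succ k ih =>
      have : LieAlgebra.derivedSeries F g (k + 1 + 1) =
          ⁅LieAlgebra.derivedSeries F g (k + 1), LieAlgebra.derivedSeries F g (k + 1)⁆ :=
        LieAlgebra.derivedSeriesOfIdeal_succ F g ⊤ (k + 1)
      rw [this, ih, h1]
  obtain ⟨n, hn⟩ := (LieAlgebra.isSolvable_iff F g).mp hs
  apply h2
  have hsu : LieAlgebra.derivedSeries F g (n + 1) =
      ⁅LieAlgebra.derivedSeries F g n, LieAlgebra.derivedSeries F g n⁆ :=
    LieAlgebra.derivedSeriesOfIdeal_succ F g ⊤ n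
  rw [← key n, hsu, hn]
  exact LieSubmodule.lie_bot _

lemma normalize_pair {F : Type*} [Field F] [CharZero F] {g : Type*} [AddCommGroup g] [Module F g]
    (B : LinearMap.BilinForm F g) (hsym : ∀ x y, B x y = B y x)
    (x y : g) (hxx : B x x = 0) (hxy : B x y ≠ 0) :
    ∃ e : g, (∃ a b : F, e = a • y + b • x) ∧ B x e = 1 ∧ B e e = 0 := by
  set c := B x y with hc
  have hyx : B y x = c := by rw [hsym]
  refine ⟨c⁻¹ • y + (-(c⁻¹ * c⁻¹ * B y y) / 2) • x, ⟨_, _, rfl⟩, ?_, ?_⟩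
  · simp only [map_add, map_smul, smul_eq_mul, hxx, ← hc]
    linear_combination inv_mul_cancel₀ hxy
  · simp only [map_add, map_smul, LinearMap.add_apply, LinearMap.smul_apply, smul_eq_mul,
      hxx, hyx, ← hc]
    linear_combination (-(c⁻¹ * c⁻¹ * B y y)) * inv_mul_cancel₀ hxy


/-- every solvable quadratic Lie algebra of dimension 4 over an algebraically
closed field of characteristic 0 is abelian (i-isomorphic to `F⁴`) or i-isomorphic to the
diamond Lie algebra `g4`. -/
theorem stmt_8 {F : Type*} [Field F] [IsAlgClosed F] [CharZero F]
    {g : Type*} [LieRing g] [LieAlgebra F g] [Module.Finite F g]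
    (B : LinearMap.BilinForm F g) (hq : IsQuadratic B)
    (hsol : LieAlgebra.IsSolvable g) (hdim : finrank F g = 4) :
    (IsLieAbelian g ∧
      ∃ b : Basis (Fin 4) F g, ∀ i j, B (b i) (b j) = if i = j then 1 else 0) ∨
    IsG4 F g B := by
  classical
  obtain ⟨hnd, hsym, hinv⟩ := hq
  haveI := hsol
  by_cases hab : IsLieAbelian g
  · exact Or.inl ⟨hab, exists_orthonormal_basis4 B hnd hsym hdim⟩
  right
  have hrefl : B.IsRefl := fun x y h => by rw [hsym]; exact h
  haveI : Nontrivial g := Module.nontrivial_of_finrank_pos (R := F) (by rw [hdim]; norm_num)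
  set DS := LieAlgebra.derivedSeries F g 1 with hDS
  set der : Submodule F g := LieSubmodule.toSubmodule DS with hder
  have hder_span : der = Submodule.span F {m | ∃ x y : g, ⁅x, y⁆ = m} := by
    have h0 : LieAlgebra.derivedSeries F g 1 = ⁅(⊤ : LieIdeal F g), (⊤ : LieIdeal F g)⁆ :=
      LieAlgebra.derivedSeriesOfIdeal_succ F g ⊤ 0
    rw [hder, hDS, h0, LieSubmodule.lieIdeal_oper_eq_linear_span']
    congr 1
    ext m
    simp
  have hbr_mem : ∀ x y : g, ⁅x, y⁆ ∈ der := fun x y => by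
    rw [hder_span]; exact Submodule.subset_span ⟨x, y, rfl⟩
  have hder_le : ∀ p : Submodule F g, (∀ x y : g, ⁅x, y⁆ ∈ p) → der ≤ p := by
    intro p hp
    rw [hder_span, Submodule.span_le]
    rintro m ⟨x, y, rfl⟩
    exact hp x y
  set Z : Submodule F g := B.orthogonal der with hZdef
  have hZmem : ∀ x : g, x ∈ Z ↔ ∀ y : g, ⁅x, y⁆ = 0 := by
    intro x
    constructor
    · intro hx y
      apply hnd.1
      intro w
      have h1 : B ⁅x, y⁆ w = B ⁅y, w⁆ x := by rw [hinv, hsym]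
      rw [h1]
      exact hx _ (hbr_mem y w)
    · intro hx n hn
      have hle : der ≤ LinearMap.ker (B.flip x) := by
        apply hder_le
        intro a b
        rw [LinearMap.mem_ker]
        have hfl : B.flip x ⁅a, b⁆ = B ⁅a, b⁆ x := LinearMap.flip_apply B ⁅a, b⁆ x
        rw [hfl, hinv, ← lie_skew, hx b, neg_zero, map_zero]
      exact hle hn
  have hZrank : finrank F Z + finrank F der = 4 := by
    have h1 := LinearMap.BilinForm.finrank_orthogonal hnd der
    rw [hdim] at h1
    have h2 : finrank F der ≤ 4 := hdim ▸ der.finrank_le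
    rw [hZdef]
    omega
  have hder_ne_top : der ≠ ⊤ := by
    intro h
    have hDStop : DS = ⊤ := by
      rw [← LieSubmodule.toSubmodule_inj, LieSubmodule.top_toSubmodule]
      exact h
    exact (ne_of_lt (LieAlgebra.derivedSeries_lt_top_of_solvable F g)) hDStop
  have hder_ne_bot : der ≠ ⊥ := by
    intro h
    apply hab
    constructor
    intro x y
    have hm := hbr_mem x y
    rw [h, Submodule.mem_bot] at hm
    exact hm
  have hder_lt : finrank F der < 4 := by
    have := Submodule.finrank_lt hder_ne_top
    omega
  have hder_pos : 0 < finrank F der := by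
    rcases Nat.eq_zero_or_pos (finrank F der) with h | h
    · exact absurd (Submodule.finrank_eq_zero.mp h) hder_ne_bot
    · exact h
  have hcases : finrank F der = 1 ∨ finrank F der = 2 ∨ finrank F der = 3 := by omega
  rcases hcases with hd1 | hd2 | hd3
  -- Case dim der = 1 : contradiction (g would be abelian)
  · exfalso
    have hq1 : finrank F (g ⧸ Z) = 1 := by
      have := Z.finrank_quotient_add_finrank
      rw [hdim] at this; omega
    let tb := finBasisOfFinrankEq F (g ⧸ Z) hq1
    obtain ⟨t0, ht0⟩ := Submodule.Quotient.mk_surjective Z (tb 0)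
    have hdec : ∀ a : g, ∃ z, z ∈ Z ∧ ∃ c : F, a = z + c • t0 := by
      intro a
      set c0 := tb.repr (Submodule.Quotient.mk a) 0 with hc0
      refine ⟨a - c0 • t0, ?_, c0, by abel⟩
      rw [← Submodule.Quotient.mk_eq_zero]
      have hs := tb.sum_repr (Submodule.Quotient.mk a)
      rw [Fin.sum_univ_one, ← hc0] at hs
      rw [Submodule.Quotient.mk_sub, Submodule.Quotient.mk_smul, ht0, ← hs, sub_self]
    apply hab
    constructor
    intro a b
    obtain ⟨za, hza, ca, rfl⟩ := hdec a
    obtain ⟨zb, hzb, cb, rfl⟩ := hdec b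
    have h1a : ∀ y : g, ⁅za, y⁆ = 0 := (hZmem za).mp hza
    have h1b : ∀ y : g, ⁅y, zb⁆ = 0 := fun y => by
      rw [← lie_skew, (hZmem zb).mp hzb, neg_zero]
    simp [lie_add, add_lie, lie_smul, smul_lie, h1a, h1b]
  -- Case dim der = 2 : contradiction
  · exfalso
    have hq2 : finrank F (g ⧸ Z) = 2 := by
      have := Z.finrank_quotient_add_finrank
      rw [hdim] at this; omega
    let tb := finBasisOfFinrankEq F (g ⧸ Z) hq2
    obtain ⟨t0, ht0⟩ := Submodule.Quotient.mk_surjective Z (tb 0)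
    obtain ⟨t1, ht1⟩ := Submodule.Quotient.mk_surjective Z (tb 1)
    have hdec : ∀ a : g, ∃ z, z ∈ Z ∧ ∃ c0 c1 : F, a = z + c0 • t0 + c1 • t1 := by
      intro a
      set c0 := tb.repr (Submodule.Quotient.mk a) 0 with hc0
      set c1 := tb.repr (Submodule.Quotient.mk a) 1 with hc1
      refine ⟨a - c0 • t0 - c1 • t1, ?_, c0, c1, by abel⟩
      rw [← Submodule.Quotient.mk_eq_zero]
      have hs := tb.sum_repr (Submodule.Quotient.mk a)
      rw [Fin.sum_univ_two, ← hc0, ← hc1] at hs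
      rw [Submodule.Quotient.mk_sub, Submodule.Quotient.mk_sub, Submodule.Quotient.mk_smul,
        Submodule.Quotient.mk_smul, ht0, ht1, ← hs]
      abel
    have hbrs : ∀ a b : g, ⁅a, b⁆ ∈ Submodule.span F {(⁅t0, t1⁆ : g)} := by
      intro a b
      obtain ⟨za, hza, ca0, ca1, rfl⟩ := hdec a
      obtain ⟨zb, hzb, cb0, cb1, rfl⟩ := hdec b
      have h1a : ∀ y : g, ⁅za, y⁆ = 0 := (hZmem za).mp hza
      have h1b : ∀ y : g, ⁅y, zb⁆ = 0 := fun y => by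
        rw [← lie_skew, (hZmem zb).mp hzb, neg_zero]
      have hskew : ⁅t1, t0⁆ = -⁅t0, t1⁆ := by rw [← lie_skew]
      have heq : ⁅za + ca0 • t0 + ca1 • t1, zb + cb0 • t0 + cb1 • t1⁆
          = (ca0 * cb1 - ca1 * cb0) • ⁅t0, t1⁆ := by
        simp only [lie_add, add_lie, lie_smul, smul_lie, h1a, h1b, lie_self, smul_zero,
          zero_add, add_zero, hskew, smul_neg, smul_smul]
        module
      rw [heq]
      exact Submodule.smul_mem _ _ (Submodule.mem_span_singleton_self _)
    have hle : der ≤ Submodule.span F {(⁅t0, t1⁆ : g)} := hder_le _ hbrs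
    have hr1 : finrank F (Submodule.span F {(⁅t0, t1⁆ : g)}) ≤ 1 := by
      by_cases h : (⁅t0, t1⁆ : g) = 0
      · rw [h, Submodule.span_zero_singleton]
        rw [finrank_bot]
        norm_num
      · rw [finrank_span_singleton h]
    have := Submodule.finrank_mono hle
    omega
  -- Main case : dim der = 3, dim Z = 1
  · have hZ1 : finrank F Z = 1 := by omega
    have hZne : Z ≠ ⊥ := by
      intro h
      rw [h, finrank_bot] at hZ1
      exact absurd hZ1 (by norm_num)
    obtain ⟨z0, hz0Z, hz0ne⟩ := Submodule.exists_mem_ne_zero_of_ne_bot hZne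
    have hz0c : ∀ y : g, ⁅z0, y⁆ = 0 := (hZmem z0).mp hz0Z
    have hz0c' : ∀ y : g, ⁅y, z0⁆ = 0 := fun y => by rw [← lie_skew, hz0c, neg_zero]
    -- z0 is isotropic
    have hz0iso : B z0 z0 = 0 := by
      by_contra hc
      set H : Submodule F g := LinearMap.ker (B z0) with hH
      have hderH : der ≤ H := by
        apply hder_le
        intro a b
        rw [hH, LinearMap.mem_ker, hsym, hinv, hz0c' b, map_zero]
      have hHrank : finrank F H = 3 := by
        have hr : LinearMap.range (B z0) = ⊤ := by
          rw [Submodule.eq_top_iff']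
          intro x
          refine ⟨(x * (B z0 z0)⁻¹) • z0, ?_⟩
          rw [map_smul, smul_eq_mul]
          field_simp
        have hrn := LinearMap.finrank_range_add_finrank_ker (B z0)
        rw [hr, finrank_top, finrank_self, hdim] at hrn
        rw [hH]
        omega
      have hHeq : der = H := by
        apply Submodule.eq_of_le_of_finrank_eq hderH
        rw [hd3, hHrank]
      have hstab : ⁅DS, DS⁆ = DS := by
        apply le_antisymm (LieSubmodule.lie_le_left _ _)
        intro m hm
        have hsub : der ≤ LieSubmodule.toSubmodule ⁅DS, DS⁆ := by
          apply hder_le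
          intro a b
          set sa := B z0 a * (B z0 z0)⁻¹ with hsa
          set sb := B z0 b * (B z0 z0)⁻¹ with hsb
          have hamem : a - sa • z0 ∈ DS := by
            have hin : a - sa • z0 ∈ der := by
              rw [hHeq, hH, LinearMap.mem_ker, map_sub, map_smul, hsa, smul_eq_mul]
              field_simp
              ring
            exact (LieSubmodule.mem_toSubmodule DS).mp hin
          have hbmem : b - sb • z0 ∈ DS := by
            have hin : b - sb • z0 ∈ der := by
              rw [hHeq, hH, LinearMap.mem_ker, map_sub, map_smul, hsb, smul_eq_mul]
              field_simp
              ring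
            exact (LieSubmodule.mem_toSubmodule DS).mp hin
          have heq2 : ⁅a, b⁆ = ⁅a - sa • z0, b - sb • z0⁆ := by
            simp [lie_sub, sub_lie, lie_smul, smul_lie, hz0c, hz0c']
          rw [heq2]
          exact (LieSubmodule.mem_toSubmodule _).mpr (LieSubmodule.lie_mem_lie hamem hbmem)
        exact (LieSubmodule.mem_toSubmodule _).mp
          (hsub ((LieSubmodule.mem_toSubmodule DS).mpr hm))
      have hDSne : DS ≠ ⊥ := by
        intro h
        apply hder_ne_bot
        rw [hder, h, LieSubmodule.bot_toSubmodule]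
      exact absurd hsol (aux_not_solvable hstab hDSne)
    -- construct e with B z0 e = 1, B e e = 0
    have hex : ∃ y0 : g, B z0 y0 ≠ 0 := by
      by_contra h
      push_neg at h
      exact hz0ne (hnd.1 z0 h)
    obtain ⟨y0, hy0⟩ := hex
    obtain ⟨e, -, hze, hee⟩ := normalize_pair B hsym z0 y0 hz0iso hy0
    have hez : B e z0 = 1 := by rw [hsym]; exact hze
    -- the plane W
    set W : Submodule F g := LinearMap.ker ((B z0).prod (B e)) with hW
    have hWmem : ∀ x : g, x ∈ W ↔ B z0 x = 0 ∧ B e x = 0 := by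
      intro x
      rw [hW, LinearMap.mem_ker, LinearMap.prod_apply, Prod.mk_eq_zero]
      exact Iff.rfl
    have hWrank : finrank F W = 2 := by
      have hr : LinearMap.range ((B z0).prod (B e)) = ⊤ := by
        rw [Submodule.eq_top_iff']
        rintro ⟨x, y⟩
        refine ⟨y • z0 + x • e, ?_⟩
        have h1 : B z0 (y • z0 + x • e) = x := by
          rw [map_add, map_smul, map_smul, hz0iso, hze, smul_eq_mul, smul_eq_mul]
          ring
        have h2 : B e (y • z0 + x • e) = y := by
          rw [map_add, map_smul, map_smul, hez, hee, smul_eq_mul, smul_eq_mul]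
          ring
        rw [LinearMap.prod_apply]
        exact Prod.ext h1 h2
      have hrn := LinearMap.finrank_range_add_finrank_ker ((B z0).prod (B e))
      rw [hr, finrank_top, hdim] at hrn
      have h2 : finrank F (F × F) = 2 := by simp
      rw [hW]
      omega
    -- nondegeneracy of B on W
    have hWnd : ∀ x, x ∈ W → (∀ y, y ∈ W → B x y = 0) → x = 0 := by
      intro x hx hxy
      obtain ⟨hx1, hx2⟩ := (hWmem x).mp hx
      apply hnd.1
      intro a
      have hwW : a - (B e a) • z0 - (B z0 a) • e ∈ W := by
        rw [hWmem]
        constructor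
        · rw [map_sub, map_sub, map_smul, map_smul, hz0iso, hze, smul_eq_mul, smul_eq_mul]
          ring
        · rw [map_sub, map_sub, map_smul, map_smul, hez, hee, smul_eq_mul, smul_eq_mul]
          ring
      have hxz : B x z0 = 0 := by rw [hsym]; exact hx1
      have hxe : B x e = 0 := by rw [hsym]; exact hx2
      have ha : B x a = B x (a - (B e a) • z0 - (B z0 a) • e)
          + (B e a) * B x z0 + (B z0 a) * B x e := by
        rw [map_sub, map_sub, map_smul, map_smul, smul_eq_mul, smul_eq_mul]
        ring
      rw [ha, hxy _ hwW, hxz, hxe]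
      ring
    -- two independent vectors in W
    obtain ⟨u, v, huW, hvW, hcomb_ne⟩ : ∃ u v : g, u ∈ W ∧ v ∈ W ∧
        ∀ c0 c1 : F, ¬(c0 = 0 ∧ c1 = 0) → c0 • u + c1 • v ≠ 0 := by
      let bW := finBasisOfFinrankEq F W hWrank
      refine ⟨(bW 0 : g), (bW 1 : g), (bW 0).2, (bW 1).2, ?_⟩
      intro c0 c1 hne h0
      have h0' : c0 • bW 0 + c1 • bW 1 = 0 := by
        apply Subtype.ext
        push_cast
        exact h0
      have hrep := congrArg (fun w => bW.repr w) h0'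
      simp only [map_add, map_smul, Basis.repr_self, map_zero] at hrep
      apply hne
      have h00 := congrArg (fun f => f 0) hrep
      have h11 := congrArg (fun f => f 1) hrep
      simp [Finsupp.single_apply] at h00 h11
      exact ⟨h00, h11⟩
    -- find isotropic p in W
    have hpex : ∃ p : g, p ∈ W ∧ p ≠ 0 ∧ B p p = 0 := by
      by_cases hBuu : B u u = 0
      · refine ⟨u, huW, ?_, hBuu⟩
        have := hcomb_ne 1 0 (by simp)
        simpa using this
      · by_cases hBvv : B v v = 0
        · refine ⟨v, hvW, ?_, hBvv⟩
          have := hcomb_ne 0 1 (by simp)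
          simpa using this
        · obtain ⟨t, ht⟩ := IsAlgClosed.exists_root
            (Polynomial.C (B v v) * Polynomial.X ^ 2 + Polynomial.C (2 * B u v) * Polynomial.X +
              Polynomial.C (B u u))
            (by rw [Polynomial.degree_quadratic hBvv]; norm_num)
          have hroot : B v v * t ^ 2 + 2 * B u v * t + B u u = 0 := by
            have h := ht
            simp only [Polynomial.IsRoot, Polynomial.eval_add, Polynomial.eval_mul,
              Polynomial.eval_pow, Polynomial.eval_C, Polynomial.eval_X] at h
            linear_combination h
          refine ⟨u + t • v, Submodule.add_mem _ huW (Submodule.smul_mem _ _ hvW), ?_, ?_⟩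
          · have := hcomb_ne 1 t (by simp)
            simpa using this
          · have hvu : B v u = B u v := by rw [hsym]
            simp only [map_add, map_smul, LinearMap.add_apply, LinearMap.smul_apply,
              smul_eq_mul, hvu]
            linear_combination hroot
    obtain ⟨p, hpW, hpne, hpp⟩ := hpex
    -- find q
    have hqex : ∃ w : g, w ∈ W ∧ B p w ≠ 0 := by
      by_contra h
      push_neg at h
      exact hpne (hWnd p hpW h)
    obtain ⟨w0, hw0W, hpw0⟩ := hqex
    obtain ⟨q, ⟨aq, bq, hq_def⟩, hpq, hqq⟩ := normalize_pair B hsym p w0 hpp hpw0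
    have hqW : q ∈ W := by
      rw [hq_def]
      exact Submodule.add_mem _ (Submodule.smul_mem _ _ hw0W) (Submodule.smul_mem _ _ hpW)
    -- the full Gram table for (e, p, q, z0)
    obtain ⟨hzp, hep⟩ := (hWmem p).mp hpW
    obtain ⟨hzq, heq⟩ := (hWmem q).mp hqW
    have hpz : B p z0 = 0 := by rw [hsym]; exact hzp
    have hqz : B q z0 = 0 := by rw [hsym]; exact hzq
    have key := vanish4 B hnd hsym hdim e p q z0 hee hep heq hez hpp hpq hpz hqq hqz hz0iso
    -- skew helper
    have hskew : ∀ x y : g, B ⁅x, y⁆ x = 0 := by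
      intro x y
      apply eq_zero_of_eq_neg'
      calc B ⁅x, y⁆ x = B x ⁅y, x⁆ := hinv x y x
        _ = B x (-⁅x, y⁆) := by rw [lie_skew]
        _ = -(B x ⁅x, y⁆) := by rw [map_neg]
        _ = -(B ⁅x, y⁆ x) := by rw [hsym]
    obtain ⟨lam, hlam⟩ : ∃ l : F, B e ⁅p, q⁆ = l := ⟨_, rfl⟩
    have hpe : B p e = 0 := by rw [hsym]; exact hep
    have hqe : B q e = 0 := by rw [hsym]; exact heq
    have hqp : B q p = 1 := by rw [hsym]; exact hpq
    have hEp : ⁅e, p⁆ = lam • p := by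
      have h := key (⁅e, p⁆ - lam • p) ?_ ?_ ?_ ?_
      · exact sub_eq_zero.mp h
      · rw [map_sub, LinearMap.sub_apply, map_smul, LinearMap.smul_apply, smul_eq_mul,
          hskew e p, hpe, mul_zero, sub_zero]
      · rw [map_sub, LinearMap.sub_apply, map_smul, LinearMap.smul_apply, smul_eq_mul,
          hinv, lie_self, map_zero, hpp, mul_zero, sub_zero]
      · rw [map_sub, LinearMap.sub_apply, map_smul, LinearMap.smul_apply, smul_eq_mul,
          hinv, hpq, mul_one, hlam, sub_self]
      · rw [map_sub, LinearMap.sub_apply, map_smul, LinearMap.smul_apply, smul_eq_mul,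
          hinv, hz0c' p, map_zero, hpz, mul_zero, sub_zero]
    have hEq : ⁅e, q⁆ = (-lam) • q := by
      have h := key (⁅e, q⁆ - (-lam) • q) ?_ ?_ ?_ ?_
      · exact sub_eq_zero.mp h
      · rw [map_sub, LinearMap.sub_apply, map_smul, LinearMap.smul_apply, smul_eq_mul,
          hskew e q, hqe, mul_zero, sub_zero]
      · have h1 : B e ⁅q, p⁆ = -lam := by
          have h2 : ⁅q, p⁆ = -⁅p, q⁆ := (lie_skew q p).symm
          rw [h2, map_neg, hlam]
        rw [map_sub, LinearMap.sub_apply, map_smul, LinearMap.smul_apply, smul_eq_mul,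
          hinv, h1, hqp, mul_one, sub_self]
      · rw [map_sub, LinearMap.sub_apply, map_smul, LinearMap.smul_apply, smul_eq_mul,
          hinv, lie_self, map_zero, hqq, mul_zero, sub_zero]
      · rw [map_sub, LinearMap.sub_apply, map_smul, LinearMap.smul_apply, smul_eq_mul,
          hinv, hz0c' q, map_zero, hqz, mul_zero, sub_zero]
    have hPq : ⁅p, q⁆ = lam • z0 := by
      have h := key (⁅p, q⁆ - lam • z0) ?_ ?_ ?_ ?_
      · exact sub_eq_zero.mp h
      · have h1 : B ⁅p, q⁆ e = lam := by rw [hsym, hlam]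
        rw [map_sub, LinearMap.sub_apply, map_smul, LinearMap.smul_apply, smul_eq_mul,
          h1, hze, mul_one, sub_self]
      · rw [map_sub, LinearMap.sub_apply, map_smul, LinearMap.smul_apply, smul_eq_mul,
          hskew p q, hzp, mul_zero, sub_zero]
      · have h2 : B ⁅p, q⁆ q = 0 := by rw [hinv, lie_self, map_zero]
        rw [map_sub, LinearMap.sub_apply, map_smul, LinearMap.smul_apply, smul_eq_mul,
          h2, hzq, mul_zero, sub_zero]
      · rw [map_sub, LinearMap.sub_apply, map_smul, LinearMap.smul_apply, smul_eq_mul,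
          hinv, hz0c' q, map_zero, hz0iso, mul_zero, sub_zero]
    -- lam ≠ 0
    have hlamne : lam ≠ 0 := by
      intro h0
      apply hab
      have hEp0 : ⁅e, p⁆ = 0 := by rw [hEp, h0, zero_smul]
      have hEq0 : ⁅e, q⁆ = 0 := by rw [hEq, h0, neg_zero, zero_smul]
      have hPq0 : ⁅p, q⁆ = 0 := by rw [hPq, h0, zero_smul]
      have hPe0 : ⁅p, e⁆ = 0 := by rw [← lie_skew, hEp0, neg_zero]
      have hQe0 : ⁅q, e⁆ = 0 := by rw [← lie_skew, hEq0, neg_zero]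
      have hQp0 : ⁅q, p⁆ = 0 := by rw [← lie_skew, hPq0, neg_zero]
      have hind := indep4 B hsym e p q z0 hee hep heq hez hpp hpq hpz hqq hqz hz0iso
      have hcard : Fintype.card (Fin 4) = finrank F g := by simp [hdim]
      let bG := basisOfLinearIndependentOfCardEqFinrank hind hcard
      have hco : ⇑bG = ![e, p, q, z0] := coe_basisOfLinearIndependentOfCardEqFinrank hind hcard
      have hspan : ∀ a : g, ∃ c0 c1 c2 c3 : F, a = c0 • e + c1 • p + c2 • q + c3 • z0 := by
        intro a
        refine ⟨bG.repr a 0, bG.repr a 1, bG.repr a 2, bG.repr a 3, ?_⟩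
        have hs := bG.sum_repr a
        rw [Fin.sum_univ_four] at hs
        have hb0 : bG 0 = e := by simp [hco]
        have hb1 : bG 1 = p := by simp [hco]
        have hb2 : bG 2 = q := by simp [hco]
        have hb3 : bG 3 = z0 := by simp [hco]
        rw [hb0, hb1, hb2, hb3] at hs
        exact hs.symm
      constructor
      intro a b
      obtain ⟨a0, a1, a2, a3, rfl⟩ := hspan a
      obtain ⟨b0, b1, b2, b3, rfl⟩ := hspan b
      simp [lie_add, add_lie, lie_smul, smul_lie, hEp0, hEq0, hPq0, hPe0, hQe0, hQp0,
        hz0c, hz0c']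
    -- normalization
    have hb1 : ⁅lam⁻¹ • e, p⁆ = p := by
      rw [smul_lie, hEp, smul_smul, inv_mul_cancel₀ hlamne, one_smul]
    have hb2 : ⁅lam⁻¹ • e, q⁆ = -q := by
      rw [smul_lie, hEq, smul_smul]
      rw [show lam⁻¹ * -lam = -1 by field_simp]
      rw [neg_smul, one_smul]
    have hb3 : ⁅lam⁻¹ • e, lam • z0⁆ = 0 := by
      rw [smul_lie, lie_smul, hz0c' e, smul_zero, smul_zero]
    have hb4 : ⁅p, q⁆ = lam • z0 := hPq
    have hb5 : ⁅p, lam • z0⁆ = 0 := by rw [lie_smul, hz0c' p, smul_zero]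
    have hb6 : ⁅q, lam • z0⁆ = 0 := by rw [lie_smul, hz0c' q, smul_zero]
    have hf1 : B (lam⁻¹ • e) (lam⁻¹ • e) = 0 := by
      simp only [map_smul, LinearMap.smul_apply, smul_eq_mul, hee]
      ring
    have hf2 : B (lam⁻¹ • e) p = 0 := by
      rw [map_smul, LinearMap.smul_apply, hep]
      simp
    have hf3 : B (lam⁻¹ • e) q = 0 := by
      rw [map_smul, LinearMap.smul_apply, heq]
      simp
    have hf4 : B (lam⁻¹ • e) (lam • z0) = 1 := by
      simp only [map_smul, LinearMap.smul_apply, smul_eq_mul, hez]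
      field_simp
    have hf7 : B p (lam • z0) = 0 := by
      rw [map_smul, hpz]
      simp
    have hf9 : B q (lam • z0) = 0 := by
      rw [map_smul, hqz]
      simp
    have hf10 : B (lam • z0) (lam • z0) = 0 := by
      simp only [map_smul, LinearMap.smul_apply, smul_eq_mul, hz0iso]
      ring
    exact g4_of_quadruple B hsym hdim (lam⁻¹ • e) p q (lam • z0) hb1 hb2 hb3 hb4 hb5 hb6
      hf1 hf2 hf3 hf4 hpp hpq hf7 hqq hf9 hf10
end

section
/- For nonzero λ1, λ2 in an algebraically closed field F of characteristic 0, the quadratic Lie algebras g_{6,2}(λ1) and g_{6,2}(λ2) are i-isomorphic if and only if λ2 = λ1, λ2 = -λ1, λ2 = λ1^{-1}, or λ2 = -λ1^{-1}. -/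
open LinearMap Module

/-- g_{6,2}(λ), basis {X,X1,X2,Z1,Z2,Z} -/
def IsG62 (F : Type*) [Field F] (g : Type*) [LieRing g] [LieAlgebra F g]
    (B : LinearMap.BilinForm F g) (lam : F) : Prop :=
  ∃ b : Basis (Fin 6) F g,
    (⁅b 0, b 1⁆ = b 1) ∧
    (⁅b 0, b 2⁆ = lam • b 2) ∧
    (⁅b 0, b 3⁆ = -(b 3)) ∧
    (⁅b 0, b 4⁆ = -(lam • b 4)) ∧
    (⁅b 0, b 5⁆ = 0) ∧
    (⁅b 1, b 2⁆ = 0) ∧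
    (⁅b 1, b 3⁆ = b 5) ∧
    (⁅b 1, b 4⁆ = 0) ∧
    (⁅b 1, b 5⁆ = 0) ∧
    (⁅b 2, b 3⁆ = 0) ∧
    (⁅b 2, b 4⁆ = lam • b 5) ∧
    (⁅b 2, b 5⁆ = 0) ∧
    (⁅b 3, b 4⁆ = 0) ∧
    (⁅b 3, b 5⁆ = 0) ∧
    (⁅b 4, b 5⁆ = 0) ∧
    (B (b 0) (b 0) = 0) ∧
    (B (b 0) (b 1) = 0) ∧
    (B (b 0) (b 2) = 0) ∧
    (B (b 0) (b 3) = 0) ∧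
    (B (b 0) (b 4) = 0) ∧
    (B (b 0) (b 5) = 1) ∧
    (B (b 1) (b 0) = 0) ∧
    (B (b 1) (b 1) = 0) ∧
    (B (b 1) (b 2) = 0) ∧
    (B (b 1) (b 3) = 1) ∧
    (B (b 1) (b 4) = 0) ∧
    (B (b 1) (b 5) = 0) ∧
    (B (b 2) (b 0) = 0) ∧
    (B (b 2) (b 1) = 0) ∧
    (B (b 2) (b 2) = 0) ∧
    (B (b 2) (b 3) = 0) ∧
    (B (b 2) (b 4) = 1) ∧
    (B (b 2) (b 5) = 0) ∧
    (B (b 3) (b 0) = 0) ∧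
    (B (b 3) (b 1) = 1) ∧
    (B (b 3) (b 2) = 0) ∧
    (B (b 3) (b 3) = 0) ∧
    (B (b 3) (b 4) = 0) ∧
    (B (b 3) (b 5) = 0) ∧
    (B (b 4) (b 0) = 0) ∧
    (B (b 4) (b 1) = 0) ∧
    (B (b 4) (b 2) = 1) ∧
    (B (b 4) (b 3) = 0) ∧
    (B (b 4) (b 4) = 0) ∧
    (B (b 4) (b 5) = 0) ∧
    (B (b 5) (b 0) = 1) ∧
    (B (b 5) (b 1) = 0) ∧
    (B (b 5) (b 2) = 0) ∧
    (B (b 5) (b 3) = 0) ∧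
    (B (b 5) (b 4) = 0) ∧
    (B (b 5) (b 5) = 0)



@[simp]
lemma my_cons_val_five {α : Type*} {m : ℕ} (x : α) (u : Fin (m+5) → α) :
    Matrix.vecCons x u 5 = Matrix.vecHead (Matrix.vecTail (Matrix.vecTail (Matrix.vecTail (Matrix.vecTail u)))) :=
  rfl

def Mx {F : Type*} [Field F] (lam a p q r s : F) : Matrix (Fin 6) (Fin 6) F :=
  !![0,0,0,0,0,0;
     -p, a, 0, 0, 0, 0;
     -(lam*q), 0, a*lam, 0, 0, 0;
     r, 0, 0, -a, 0, 0;
     lam*s, 0, 0, 0, -(a*lam), 0;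
     0, -r, -(lam*s), p, lam*q, 0]

set_option maxHeartbeats 1000000 in
theorem trMx2 {F : Type*} [Field F] (lam a p q r s : F) :
    Matrix.trace (Mx lam a p q r s * Mx lam a p q r s) = 2*(1+lam^2)*a^2 := by
  simp [Mx, Matrix.trace, Matrix.mul_apply, Fin.sum_univ_six, Matrix.vecHead, Matrix.vecTail]
  ring

set_option maxHeartbeats 1000000 in
theorem trMx4 {F : Type*} [Field F] (lam a p q r s : F) :
    Matrix.trace ((Mx lam a p q r s * Mx lam a p q r s) * (Mx lam a p q r s * Mx lam a p q r s)) = 2*(1+lam^4)*a^4 := by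
  simp [Mx, Matrix.trace, Matrix.mul_apply, Fin.sum_univ_six, Matrix.vecHead, Matrix.vecTail]
  ring

set_option maxHeartbeats 4000000 in
theorem g62_trace {F : Type*} [Field F] {g : Type*} [LieRing g] [LieAlgebra F g]
    (lam : F) (b : Basis (Fin 6) F g)
    (h01 : ⁅b 0, b 1⁆ = b 1)
    (h02 : ⁅b 0, b 2⁆ = lam • b 2)
    (h03 : ⁅b 0, b 3⁆ = -(b 3))
    (h04 : ⁅b 0, b 4⁆ = -(lam • b 4))
    (h05 : ⁅b 0, b 5⁆ = (0:g))
    (h12 : ⁅b 1, b 2⁆ = (0:g))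
    (h13 : ⁅b 1, b 3⁆ = b 5)
    (h14 : ⁅b 1, b 4⁆ = (0:g))
    (h15 : ⁅b 1, b 5⁆ = (0:g))
    (h23 : ⁅b 2, b 3⁆ = (0:g))
    (h24 : ⁅b 2, b 4⁆ = lam • b 5)
    (h25 : ⁅b 2, b 5⁆ = (0:g))
    (h34 : ⁅b 3, b 4⁆ = (0:g))
    (h35 : ⁅b 3, b 5⁆ = (0:g))
    (h45 : ⁅b 4, b 5⁆ = (0:g))
    (x : g) :
    LinearMap.trace F g ((LieAlgebra.ad F g x) ∘ₗ (LieAlgebra.ad F g x)) =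
      2*(1+lam^2)*(b.repr x 0)^2 ∧
    LinearMap.trace F g (((LieAlgebra.ad F g x) ∘ₗ (LieAlgebra.ad F g x)) ∘ₗ
        ((LieAlgebra.ad F g x) ∘ₗ (LieAlgebra.ad F g x))) =
      2*(1+lam^4)*(b.repr x 0)^4 := by
  set a : Fin 6 → F := fun k => b.repr x k with ha
  have hxx : (∑ k : Fin 6, a k • b k) = x := b.sum_repr x
  have r10 : ⁅b 1, b 0⁆ = -⁅b 0, b 1⁆ := (lie_skew (b 1) (b 0)).symm
  have r20 : ⁅b 2, b 0⁆ = -⁅b 0, b 2⁆ := (lie_skew (b 2) (b 0)).symm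
  have r30 : ⁅b 3, b 0⁆ = -⁅b 0, b 3⁆ := (lie_skew (b 3) (b 0)).symm
  have r40 : ⁅b 4, b 0⁆ = -⁅b 0, b 4⁆ := (lie_skew (b 4) (b 0)).symm
  have r50 : ⁅b 5, b 0⁆ = -⁅b 0, b 5⁆ := (lie_skew (b 5) (b 0)).symm
  have r21 : ⁅b 2, b 1⁆ = -⁅b 1, b 2⁆ := (lie_skew (b 2) (b 1)).symm
  have r31 : ⁅b 3, b 1⁆ = -⁅b 1, b 3⁆ := (lie_skew (b 3) (b 1)).symm
  have r41 : ⁅b 4, b 1⁆ = -⁅b 1, b 4⁆ := (lie_skew (b 4) (b 1)).symm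
  have r51 : ⁅b 5, b 1⁆ = -⁅b 1, b 5⁆ := (lie_skew (b 5) (b 1)).symm
  have r32 : ⁅b 3, b 2⁆ = -⁅b 2, b 3⁆ := (lie_skew (b 3) (b 2)).symm
  have r42 : ⁅b 4, b 2⁆ = -⁅b 2, b 4⁆ := (lie_skew (b 4) (b 2)).symm
  have r52 : ⁅b 5, b 2⁆ = -⁅b 2, b 5⁆ := (lie_skew (b 5) (b 2)).symm
  have r43 : ⁅b 4, b 3⁆ = -⁅b 3, b 4⁆ := (lie_skew (b 4) (b 3)).symm
  have r53 : ⁅b 5, b 3⁆ = -⁅b 3, b 5⁆ := (lie_skew (b 5) (b 3)).symm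
  have r54 : ⁅b 5, b 4⁆ = -⁅b 4, b 5⁆ := (lie_skew (b 5) (b 4)).symm
  have hM : LinearMap.toMatrix b b (LieAlgebra.ad F g x) =
      Mx lam (a 0) (a 1) (a 2) (a 3) (a 4) := by
    ext i j
    rw [LinearMap.toMatrix_apply, LieAlgebra.ad_apply, ← lie_skew, ← hxx]
    fin_cases j <;> fin_cases i <;>
      simp [Mx, Fin.sum_univ_six, lie_add, lie_smul, h01, h02, h03, h04, h05, h12, h13, h14, h15, h23, h24, h25, h34, h35, h45, r10, r20, r30, r40, r50, r21, r31, r41, r51, r32, r42, r52, r43, r53, r54,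
        Basis.repr_self, Finsupp.single_apply, smul_eq_mul, Matrix.vecHead, Matrix.vecTail] <;>
      ring
  constructor
  · rw [LinearMap.trace_eq_matrix_trace F b, LinearMap.toMatrix_comp b b b, hM, trMx2]
  · rw [LinearMap.trace_eq_matrix_trace F b, LinearMap.toMatrix_comp b b b,
      LinearMap.toMatrix_comp b b b, hM, trMx4]

theorem g62_transport {F : Type*} [Field F]
    {g1 g2 : Type*} [LieRing g1] [LieAlgebra F g1] [LieRing g2] [LieAlgebra F g2]
    {B1 : LinearMap.BilinForm F g1} {B2 : LinearMap.BilinForm F g2} {lam : F}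
    (hI : IIsom F B1 B2) (h : IsG62 F g1 B1 lam) : IsG62 F g2 B2 lam := by
  obtain ⟨A, hA⟩ := hI
  obtain ⟨b, h01, h02, h03, h04, h05, h12, h13, h14, h15, h23, h24, h25, h34, h35, h45, f00, f01, f02, f03, f04, f05, f10, f11, f12, f13, f14, f15, f20, f21, f22, f23, f24, f25, f30, f31, f32, f33, f34, f35, f40, f41, f42, f43, f44, f45, f50, f51, f52, f53, f54, f55⟩ := h
  refine ⟨b.map A.toLinearEquiv, ?_⟩
  simp only [Basis.map_apply]
  have hml : ∀ x y : g1, (⁅A x, A y⁆ : g2) = A ⁅x, y⁆ := fun x y => (A.map_lie x y).symm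
  have hcoe2 : ∀ x : g1, A.toLinearEquiv x = A x := fun _ => rfl
  have hsm : ∀ (a : F) (x : g1), A (a • x) = a • A x := fun a x => by
    rw [← hcoe2, ← hcoe2]; exact map_smul A.toLinearEquiv a x
  have hng : ∀ x : g1, A (-x) = -(A x) := fun x => by
    rw [← hcoe2, ← hcoe2]; exact map_neg A.toLinearEquiv x
  have hz : A (0 : g1) = 0 := by rw [← hcoe2]; exact map_zero A.toLinearEquiv
  refine ⟨?_, ?_, ?_, ?_, ?_, ?_, ?_, ?_, ?_, ?_, ?_, ?_, ?_, ?_, ?_, ?_, ?_, ?_, ?_, ?_, ?_, ?_, ?_, ?_, ?_, ?_, ?_, ?_, ?_, ?_, ?_, ?_, ?_, ?_, ?_, ?_, ?_, ?_, ?_, ?_, ?_, ?_, ?_, ?_, ?_, ?_, ?_, ?_, ?_, ?_, ?_⟩ <;>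
    simp [hcoe2, hml, hA, hsm, hng, hz, h01, h02, h03, h04, h05, h12, h13, h14, h15, h23, h24, h25, h34, h35, h45, f00, f01, f02, f03, f04, f05, f10, f11, f12, f13, f14, f15, f20, f21, f22, f23, f24, f25, f30, f31, f32, f33, f34, f35, f40, f41, f42, f43, f44, f45, f50, f51, f52, f53, f54, f55]

theorem g62_neg {F : Type*} [Field F]
    {g : Type*} [LieRing g] [LieAlgebra F g]
    {B : LinearMap.BilinForm F g} {lam : F}
    (h : IsG62 F g B lam) : IsG62 F g B (-lam) := by
  obtain ⟨b, h01, h02, h03, h04, h05, h12, h13, h14, h15, h23, h24, h25, h34, h35, h45, f00, f01, f02, f03, f04, f05, f10, f11, f12, f13, f14, f15, f20, f21, f22, f23, f24, f25, f30, f31, f32, f33, f34, f35, f40, f41, f42, f43, f44, f45, f50, f51, f52, f53, f54, f55⟩ := h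
  set c := b.reindex (Equiv.swap 2 4) with hcdef
  have hc : ∀ i, c i = b ((Equiv.swap (2:Fin 6) 4) i) := fun i => by
    rw [hcdef, Basis.reindex_apply, Equiv.symm_swap]
  have hc0 : c 0 = b 0 := by rw [hc]; congr 1
  have hc1 : c 1 = b 1 := by rw [hc]; congr 1
  have hc2 : c 2 = b 4 := by rw [hc]; congr 1
  have hc3 : c 3 = b 3 := by rw [hc]; congr 1
  have hc4 : c 4 = b 2 := by rw [hc]; congr 1
  have hc5 : c 5 = b 5 := by rw [hc]; congr 1
  have r42 : ⁅b 4, b 2⁆ = -(lam • b 5) := by rw [← lie_skew, h24]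
  have r43 : ⁅b 4, b 3⁆ = 0 := by rw [← lie_skew, h34, neg_zero]
  have r32 : ⁅b 3, b 2⁆ = 0 := by rw [← lie_skew, h23, neg_zero]
  refine ⟨c, ?_, ?_, ?_, ?_, ?_, ?_, ?_, ?_, ?_, ?_, ?_, ?_, ?_, ?_, ?_, ?_, ?_, ?_, ?_, ?_, ?_, ?_, ?_, ?_, ?_, ?_, ?_, ?_, ?_, ?_, ?_, ?_, ?_, ?_, ?_, ?_, ?_, ?_, ?_, ?_, ?_, ?_, ?_, ?_, ?_, ?_, ?_, ?_, ?_, ?_, ?_⟩ <;>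
    simp [hc0, hc1, hc2, hc3, hc4, hc5, r42, r43, r32, neg_smul, h01, h02, h03, h04, h05, h12, h13, h14, h15, h23, h24, h25, h34, h35, h45, f00, f01, f02, f03, f04, f05, f10, f11, f12, f13, f14, f15, f20, f21, f22, f23, f24, f25, f30, f31, f32, f33, f34, f35, f40, f41, f42, f43, f44, f45, f50, f51, f52, f53, f54, f55]

theorem g62_inv {F : Type*} [Field F]
    {g : Type*} [LieRing g] [LieAlgebra F g]
    {B : LinearMap.BilinForm F g} {lam : F} (hl : lam ≠ 0)
    (h : IsG62 F g B lam) : IsG62 F g B lam⁻¹ := by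
  obtain ⟨b, h01, h02, h03, h04, h05, h12, h13, h14, h15, h23, h24, h25, h34, h35, h45, f00, f01, f02, f03, f04, f05, f10, f11, f12, f13, f14, f15, f20, f21, f22, f23, f24, f25, f30, f31, f32, f33, f34, f35, f40, f41, f42, f43, f44, f45, f50, f51, f52, f53, f54, f55⟩ := h
  set w : Fin 6 → Fˣ := fun i =>
    if i = 0 then Units.mk0 lam⁻¹ (inv_ne_zero hl) else if i = 5 then Units.mk0 lam hl else 1
    with hw
  set e : Equiv.Perm (Fin 6) := (Equiv.swap (1:Fin 6) 2).trans (Equiv.swap 3 4) with he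
  set c := (b.unitsSMul w).reindex e with hcdef
  have hc : ∀ i, c i = (w (e.symm i) : F) • b (e.symm i) := fun i => by
    rw [hcdef, Basis.reindex_apply, Basis.unitsSMul_apply, Units.smul_def]
  have hc0 : c 0 = lam⁻¹ • b 0 := by
    rw [hc, show e.symm 0 = 0 by decide]
    simp only [hw]
    rw [if_pos trivial, Units.val_mk0]
  have hc1 : c 1 = b 2 := by
    rw [hc, show e.symm 1 = 2 by decide]
    simp only [hw]
    rw [if_neg (by decide), if_neg (by decide), Units.val_one, one_smul]
  have hc2 : c 2 = b 1 := by
    rw [hc, show e.symm 2 = 1 by decide]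
    simp only [hw]
    rw [if_neg (by decide), if_neg (by decide), Units.val_one, one_smul]
  have hc3 : c 3 = b 4 := by
    rw [hc, show e.symm 3 = 4 by decide]
    simp only [hw]
    rw [if_neg (by decide), if_neg (by decide), Units.val_one, one_smul]
  have hc4 : c 4 = b 3 := by
    rw [hc, show e.symm 4 = 3 by decide]
    simp only [hw]
    rw [if_neg (by decide), if_neg (by decide), Units.val_one, one_smul]
  have hc5 : c 5 = lam • b 5 := by
    rw [hc, show e.symm 5 = 5 by decide]
    simp only [hw]
    rw [if_neg (by decide), if_pos trivial, Units.val_mk0]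
  have r21 : ⁅b 2, b 1⁆ = 0 := by rw [← lie_skew, h12, neg_zero]
  have r43 : ⁅b 4, b 3⁆ = 0 := by rw [← lie_skew, h34, neg_zero]
  refine ⟨c, ?_, ?_, ?_, ?_, ?_, ?_, ?_, ?_, ?_, ?_, ?_, ?_, ?_, ?_, ?_, ?_, ?_, ?_, ?_, ?_, ?_, ?_, ?_, ?_, ?_, ?_, ?_, ?_, ?_, ?_, ?_, ?_, ?_, ?_, ?_, ?_, ?_, ?_, ?_, ?_, ?_, ?_, ?_, ?_, ?_, ?_, ?_, ?_, ?_, ?_, ?_⟩ <;>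
    simp [hc0, hc1, hc2, hc3, hc4, hc5, r21, r43, smul_lie, lie_smul, smul_smul,
      inv_mul_cancel₀ hl, mul_inv_cancel₀ hl, LinearMap.smul_apply, map_smul,
      smul_eq_mul, h01, h02, h03, h04, h05, h12, h13, h14, h15, h23, h24, h25, h34, h35, h45, f00, f01, f02, f03, f04, f05, f10, f11, f12, f13, f14, f15, f20, f21, f22, f23, f24, f25, f30, f31, f32, f33, f34, f35, f40, f41, f42, f43, f44, f45, f50, f51, f52, f53, f54, f55]

set_option maxHeartbeats 2000000 in
theorem g62_isom {F : Type*} [Field F]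
    {g1 g2 : Type*} [LieRing g1] [LieAlgebra F g1] [LieRing g2] [LieAlgebra F g2]
    {B1 : LinearMap.BilinForm F g1} {B2 : LinearMap.BilinForm F g2} {mu : F}
    (H1 : IsG62 F g1 B1 mu) (H2 : IsG62 F g2 B2 mu) : IIsom F B1 B2 := by
  obtain ⟨b, h01, h02, h03, h04, h05, h12, h13, h14, h15, h23, h24, h25, h34, h35, h45, f00, f01, f02, f03, f04, f05, f10, f11, f12, f13, f14, f15, f20, f21, f22, f23, f24, f25, f30, f31, f32, f33, f34, f35, f40, f41, f42, f43, f44, f45, f50, f51, f52, f53, f54, f55⟩ := H1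
  obtain ⟨c, k01, k02, k03, k04, k05, k12, k13, k14, k15, k23, k24, k25, k34, k35, k45, g00, g01, g02, g03, g04, g05, g10, g11, g12, g13, g14, g15, g20, g21, g22, g23, g24, g25, g30, g31, g32, g33, g34, g35, g40, g41, g42, g43, g44, g45, g50, g51, g52, g53, g54, g55⟩ := H2
  set A : g1 ≃ₗ[F] g2 := b.equiv c (Equiv.refl _) with hA
  have hAb : ∀ i, A (b i) = c i := fun i => by
    rw [hA, Basis.equiv_apply, Equiv.refl_apply]
  have rb10 : ⁅b 1, b 0⁆ = -⁅b 0, b 1⁆ := (lie_skew (b 1) (b 0)).symm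
  have rb20 : ⁅b 2, b 0⁆ = -⁅b 0, b 2⁆ := (lie_skew (b 2) (b 0)).symm
  have rb30 : ⁅b 3, b 0⁆ = -⁅b 0, b 3⁆ := (lie_skew (b 3) (b 0)).symm
  have rb40 : ⁅b 4, b 0⁆ = -⁅b 0, b 4⁆ := (lie_skew (b 4) (b 0)).symm
  have rb50 : ⁅b 5, b 0⁆ = -⁅b 0, b 5⁆ := (lie_skew (b 5) (b 0)).symm
  have rb21 : ⁅b 2, b 1⁆ = -⁅b 1, b 2⁆ := (lie_skew (b 2) (b 1)).symm
  have rb31 : ⁅b 3, b 1⁆ = -⁅b 1, b 3⁆ := (lie_skew (b 3) (b 1)).symm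
  have rb41 : ⁅b 4, b 1⁆ = -⁅b 1, b 4⁆ := (lie_skew (b 4) (b 1)).symm
  have rb51 : ⁅b 5, b 1⁆ = -⁅b 1, b 5⁆ := (lie_skew (b 5) (b 1)).symm
  have rb32 : ⁅b 3, b 2⁆ = -⁅b 2, b 3⁆ := (lie_skew (b 3) (b 2)).symm
  have rb42 : ⁅b 4, b 2⁆ = -⁅b 2, b 4⁆ := (lie_skew (b 4) (b 2)).symm
  have rb52 : ⁅b 5, b 2⁆ = -⁅b 2, b 5⁆ := (lie_skew (b 5) (b 2)).symm
  have rb43 : ⁅b 4, b 3⁆ = -⁅b 3, b 4⁆ := (lie_skew (b 4) (b 3)).symm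
  have rb53 : ⁅b 5, b 3⁆ = -⁅b 3, b 5⁆ := (lie_skew (b 5) (b 3)).symm
  have rb54 : ⁅b 5, b 4⁆ = -⁅b 4, b 5⁆ := (lie_skew (b 5) (b 4)).symm
  have rc10 : ⁅c 1, c 0⁆ = -⁅c 0, c 1⁆ := (lie_skew (c 1) (c 0)).symm
  have rc20 : ⁅c 2, c 0⁆ = -⁅c 0, c 2⁆ := (lie_skew (c 2) (c 0)).symm
  have rc30 : ⁅c 3, c 0⁆ = -⁅c 0, c 3⁆ := (lie_skew (c 3) (c 0)).symm
  have rc40 : ⁅c 4, c 0⁆ = -⁅c 0, c 4⁆ := (lie_skew (c 4) (c 0)).symm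
  have rc50 : ⁅c 5, c 0⁆ = -⁅c 0, c 5⁆ := (lie_skew (c 5) (c 0)).symm
  have rc21 : ⁅c 2, c 1⁆ = -⁅c 1, c 2⁆ := (lie_skew (c 2) (c 1)).symm
  have rc31 : ⁅c 3, c 1⁆ = -⁅c 1, c 3⁆ := (lie_skew (c 3) (c 1)).symm
  have rc41 : ⁅c 4, c 1⁆ = -⁅c 1, c 4⁆ := (lie_skew (c 4) (c 1)).symm
  have rc51 : ⁅c 5, c 1⁆ = -⁅c 1, c 5⁆ := (lie_skew (c 5) (c 1)).symm
  have rc32 : ⁅c 3, c 2⁆ = -⁅c 2, c 3⁆ := (lie_skew (c 3) (c 2)).symm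
  have rc42 : ⁅c 4, c 2⁆ = -⁅c 2, c 4⁆ := (lie_skew (c 4) (c 2)).symm
  have rc52 : ⁅c 5, c 2⁆ = -⁅c 2, c 5⁆ := (lie_skew (c 5) (c 2)).symm
  have rc43 : ⁅c 4, c 3⁆ = -⁅c 3, c 4⁆ := (lie_skew (c 4) (c 3)).symm
  have rc53 : ⁅c 5, c 3⁆ = -⁅c 3, c 5⁆ := (lie_skew (c 5) (c 3)).symm
  have rc54 : ⁅c 5, c 4⁆ = -⁅c 4, c 5⁆ := (lie_skew (c 5) (c 4)).symm
  have key : ∀ x y : g1, ⁅A x, A y⁆ = A ⁅x, y⁆ := by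
    have hP : ∀ (x₁ x₂ y : g1), (⁅A (x₁ + x₂), A y⁆ : g2) = ⁅A x₁, A y⁆ + ⁅A x₂, A y⁆ := by
      intro x₁ x₂ y; simp [add_lie]
    set P : g1 →ₗ[F] g1 →ₗ[F] g2 := LinearMap.mk₂ F (fun x y => ⁅A x, A y⁆)
      hP
      (fun a x y => by simp [smul_lie])
      (fun x y₁ y₂ => by simp [lie_add])
      (fun a x y => by simp [lie_smul]) with hPdef
    set Q : g1 →ₗ[F] g1 →ₗ[F] g2 := LinearMap.mk₂ F (fun x y => A ⁅x, y⁆)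
      (fun x₁ x₂ y => by simp [add_lie])
      (fun a x y => by simp [smul_lie])
      (fun x y₁ y₂ => by simp [lie_add])
      (fun a x y => by simp [lie_smul]) with hQdef
    have heq : P = Q := by
      refine LinearMap.ext_basis b b fun i j => ?_
      rw [hPdef, hQdef]
      simp only [LinearMap.mk₂_apply, hAb]
      fin_cases i <;> fin_cases j <;>
        simp [h01, h02, h03, h04, h05, h12, h13, h14, h15, h23, h24, h25, h34, h35, h45, rb10, rb20, rb30, rb40, rb50, rb21, rb31, rb41, rb51, rb32, rb42, rb52, rb43, rb53, rb54, k01, k02, k03, k04, k05, k12, k13, k14, k15, k23, k24, k25, k34, k35, k45, rc10, rc20, rc30, rc40, rc50, rc21, rc31, rc41, rc51, rc32, rc42, rc52, rc43, rc53, rc54, hAb, map_smul, map_neg, map_zero]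
    intro x y
    exact LinearMap.congr_fun (LinearMap.congr_fun heq x) y
  refine ⟨{ A with map_lie' := fun {x y} => (key x y).symm }, ?_⟩
  have hform : B2.compl₁₂ A.toLinearMap A.toLinearMap = B1 := by
    refine LinearMap.ext_basis b b fun i j => ?_
    simp only [LinearMap.compl₁₂_apply, LinearEquiv.coe_coe, hAb]
    fin_cases i <;> fin_cases j <;> simp [f00, f01, f02, f03, f04, f05, f10, f11, f12, f13, f14, f15, f20, f21, f22, f23, f24, f25, f30, f31, f32, f33, f34, f35, f40, f41, f42, f43, f44, f45, f50, f51, f52, f53, f54, f55, g00, g01, g02, g03, g04, g05, g10, g11, g12, g13, g14, g15, g20, g21, g22, g23, g24, g25, g30, g31, g32, g33, g34, g35, g40, g41, g42, g43, g44, g45, g50, g51, g52, g53, g54, g55]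
  intro x y
  have := LinearMap.congr_fun (LinearMap.congr_fun hform x) y
  simp only [LinearMap.compl₁₂_apply] at this
  exact this

/-- `g_{6,2}(λ1)` and `g_{6,2}(λ2)` are i-isomorphic iff
`λ2 = ±λ1` or `λ2 = ±λ1⁻¹`. -/
theorem stmt_11 {F : Type*} [Field F] [IsAlgClosed F] [CharZero F]
    {g1 g2 : Type*} [LieRing g1] [LieAlgebra F g1] [LieRing g2] [LieAlgebra F g2]
    (B1 : LinearMap.BilinForm F g1) (B2 : LinearMap.BilinForm F g2)
    (lam1 lam2 : F) (h1 : lam1 ≠ 0) (h2 : lam2 ≠ 0)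
    (hg1 : IsG62 F g1 B1 lam1) (hg2 : IsG62 F g2 B2 lam2) :
    IIsom F B1 B2 ↔
      (lam2 = lam1 ∨ lam2 = -lam1 ∨ lam2 = lam1⁻¹ ∨ lam2 = -lam1⁻¹) := by
  constructor
  · intro hI
    have hg1' : IsG62 F g2 B2 lam1 := g62_transport hI hg1
    obtain ⟨b, hb01, hb02, hb03, hb04, hb05, hb12, hb13, hb14, hb15, hb23, hb24, hb25, hb34, hb35, hb45, fb00, fb01, fb02, fb03, fb04, fb05, fb10, fb11, fb12, fb13, fb14, fb15, fb20, fb21, fb22, fb23, fb24, fb25, fb30, fb31, fb32, fb33, fb34, fb35, fb40, fb41, fb42, fb43, fb44, fb45, fb50, fb51, fb52, fb53, fb54, fb55⟩ := hg1'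
    obtain ⟨c, kc01, kc02, kc03, kc04, kc05, kc12, kc13, kc14, kc15, kc23, kc24, kc25, kc34, kc35, kc45, gc00, gc01, gc02, gc03, gc04, gc05, gc10, gc11, gc12, gc13, gc14, gc15, gc20, gc21, gc22, gc23, gc24, gc25, gc30, gc31, gc32, gc33, gc34, gc35, gc40, gc41, gc42, gc43, gc44, gc45, gc50, gc51, gc52, gc53, gc54, gc55⟩ := hg2
    have T1 := g62_trace lam1 b hb01 hb02 hb03 hb04 hb05 hb12 hb13 hb14 hb15 hb23 hb24 hb25 hb34 hb35 hb45 (b 0)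
    have T2 := g62_trace lam2 c kc01 kc02 kc03 kc04 kc05 kc12 kc13 kc14 kc15 kc23 kc24 kc25 kc34 kc35 kc45 (b 0)
    set t : F := c.repr (b 0) 0 with ht
    have hb0 : b.repr (b 0) 0 = 1 := by simp
    rw [hb0] at T1
    have htr2 : 2*(1+lam1^2)*(1:F)^2 = 2*(1+lam2^2)*t^2 := T1.1 ▸ T2.1
    have htr4 : 2*(1+lam1^4)*(1:F)^4 = 2*(1+lam2^4)*t^4 := T1.2 ▸ T2.2
    have e2 : 1 + lam1^2 = (1+lam2^2)*t^2 := by linear_combination htr2 / 2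
    have e4 : 1 + lam1^4 = (1+lam2^4)*t^4 := by linear_combination htr4 / 2
    have key0 : (1+lam1^4)*(1+lam2^2)^2 = (1+lam2^4)*(1+lam1^2)^2 := by
      linear_combination (1+lam2^2)^2 * e4 -
        (1+lam2^4)*((1+lam2^2)*t^2 + (1+lam1^2)) * e2
    have key : (lam2^2 - lam1^2)*(1 - lam1^2*lam2^2) = 0 := by
      linear_combination key0 / 2
    rcases mul_eq_zero.mp key with hk | hk
    · have hfac : (lam2 - lam1)*(lam2 + lam1) = 0 := by linear_combination hk
      rcases mul_eq_zero.mp hfac with hf | hf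
      · exact Or.inl (by linear_combination hf)
      · exact Or.inr (Or.inl (by linear_combination hf))
    · have hfac : (lam2*lam1 - 1)*(lam2*lam1 + 1) = 0 := by linear_combination -hk
      rcases mul_eq_zero.mp hfac with hf | hf
      · refine Or.inr (Or.inr (Or.inl ?_))
        field_simp
        linear_combination hf
      · refine Or.inr (Or.inr (Or.inr ?_))
        field_simp
        linear_combination hf
  · rintro (rfl | rfl | rfl | rfl)
    · exact g62_isom hg1 hg2
    · exact g62_isom (g62_neg hg1) hg2
    · exact g62_isom (g62_inv h1 hg1) hg2
    · exact g62_isom (g62_neg (g62_inv h1 hg1)) hg2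
end

section
/- Let (g,B) be a solvable quadratic Lie algebra over a field F of characteristic 0 that has a nonzero isotropic central element Z. Choose X ∈ g isotropic with B(Z,X) = 1, and set h = (F X ⊕ F Z)^⊥. Then: (i) [h,h] ⊆ h ⊕ F Z, so the bracket [Y,Y']_h := p([Y,Y']) (where p : h ⊕ F Z → h is the projection along F Z) together with B_h := B|_{h×h} makes h a solvable quadratic Lie algebra of dimension dim g − 2; (ii) D := p ∘ ad(X)|_h is a skew-symmetric derivation of (h,B_h); and (iii) g is i-isomorphic to the double extension of h by means of D. -/
open LinearMap Module

universe u v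

/-- bundled data of a Lie algebra over `F` together with a bilinear form. -/
structure QuadLieData (F : Type u) [Field F] : Type (max u (v + 1)) where
  carrier : Type v
  [instLieRing : LieRing carrier]
  [instLieAlgebra : LieAlgebra F carrier]
  form : LinearMap.BilinForm F carrier

attribute [instance] QuadLieData.instLieRing QuadLieData.instLieAlgebra

namespace Stmt14Aux

variable {F : Type u} [Field F] {g : Type v} [LieRing g] [LieAlgebra F g]

/-- All the hypotheses we need, bundled. -/
structure Setup (B : LinearMap.BilinForm F g) (Z X : g) : Prop where
  nondeg : B.Nondegenerate
  symm : BilinSymm B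
  inv : LieInvariant B
  zlie : ∀ y : g, ⁅Z, y⁆ = 0
  zz : B Z Z = 0
  xx : B X X = 0
  zx : B Z X = 1
  half : ∀ a : F, a = -a → a = 0

variable {B : LinearMap.BilinForm F g} {Z X : g}

/-- the orthogonal complement of `span {X, Z}`. -/
def Wsub (B : LinearMap.BilinForm F g) (Z X : g) : Submodule F g where
  carrier := {y : g | B y X = 0 ∧ B y Z = 0}
  add_mem' := by
    rintro a b ⟨h1, h2⟩ ⟨h3, h4⟩
    constructor <;> simp_all [map_add]
  zero_mem' := by simp
  smul_mem' := by
    rintro c a ⟨h1, h2⟩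
    constructor <;> simp_all [map_smul]

lemma mem_Wsub {y : g} : y ∈ Wsub B Z X ↔ B y X = 0 ∧ B y Z = 0 := Iff.rfl

namespace Setup

lemma xz (s : Setup B Z X) : B X Z = 1 := by rw [s.symm]; exact s.zx
lemma liez (s : Setup B Z X) (y : g) : ⁅y, Z⁆ = 0 := by rw [← lie_skew, s.zlie, neg_zero]
lemma bZ (s : Setup B Z X) (v w : g) : B ⁅v, w⁆ Z = 0 := by rw [s.inv, s.liez, map_zero]
lemma bXX (s : Setup B Z X) (v : g) : B ⁅X, v⁆ X = 0 := by
  apply s.half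
  calc B ⁅X, v⁆ X = B X ⁅v, X⁆ := s.inv _ _ _
    _ = B X (-⁅X, v⁆) := by rw [← lie_skew v X]
    _ = -(B X ⁅X, v⁆) := by rw [map_neg]
    _ = -(B ⁅X, v⁆ X) := by rw [s.symm X]

lemma bX (s : Setup B Z X) (x y : g) : B ⁅X, x⁆ y = B ⁅x, y⁆ X := by
  rw [s.inv, s.symm]

lemma braMem (s : Setup B Z X) (x y : g) : ⁅x, y⁆ - (B ⁅x, y⁆ X) • Z ∈ Wsub B Z X := by
  constructor
  · simp [map_sub, map_smul, s.zx]
  · simp [map_sub, map_smul, s.zz, s.bZ]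

lemma DMem (s : Setup B Z X) (x : g) : ⁅X, x⁆ ∈ Wsub B Z X := ⟨s.bXX x, s.bZ X x⟩

/-- orthogonal decomposition component in `Wsub`. -/
lemma projMem (s : Setup B Z X) (v : g) : v - (B v Z) • X - (B v X) • Z ∈ Wsub B Z X := by
  constructor
  · simp [map_sub, map_smul, s.xx, s.zx]
  · simp [map_sub, map_smul, s.zz, s.xz]

/-- the bracket of `Wsub`. -/
def bra (s : Setup B Z X) (x y : Wsub B Z X) : Wsub B Z X :=
  ⟨⁅(x : g), (y : g)⁆ - (B ⁅(x : g), (y : g)⁆ X) • Z, s.braMem _ _⟩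

lemma bra_val (s : Setup B Z X) (x y : Wsub B Z X) :
    (s.bra x y : g) = ⁅(x : g), (y : g)⁆ - (B ⁅(x : g), (y : g)⁆ X) • Z := rfl

/-- the Lie ring structure on `Wsub`. -/
def lieRingW (s : Setup B Z X) : LieRing (Wsub B Z X) :=
  { (inferInstance : AddCommGroup (Wsub B Z X)) with
    bracket := s.bra
    add_lie := by
      intro x y z
      apply Subtype.ext
      show (s.bra (x + y) z : g) = (s.bra x z : g) + (s.bra y z : g)
      simp only [bra_val, Submodule.coe_add, add_lie, map_add, LinearMap.add_apply, add_smul]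
      abel
    lie_add := by
      intro x y z
      apply Subtype.ext
      show (s.bra x (y + z) : g) = (s.bra x y : g) + (s.bra x z : g)
      simp only [bra_val, Submodule.coe_add, lie_add, map_add, LinearMap.add_apply, add_smul]
      abel
    lie_self := by
      intro x
      apply Subtype.ext
      show (s.bra x x : g) = 0
      simp [bra_val]
    leibniz_lie := by
      intro x y z
      apply Subtype.ext
      show (s.bra x (s.bra y z) : g) = (s.bra (s.bra x y) z : g) + (s.bra y (s.bra x z) : g)
      simp only [bra_val, lie_sub, sub_lie, lie_smul, smul_lie, s.zlie, s.liez, smul_zero,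
        sub_zero, map_sub, map_smul, LinearMap.sub_apply, LinearMap.smul_apply, s.zx]
      rw [show ⁅(x : g), ⁅(y : g), (z : g)⁆⁆ = ⁅⁅(x : g), (y : g)⁆, (z : g)⁆ +
        ⁅(y : g), ⁅(x : g), (z : g)⁆⁆ from leibniz_lie _ _ _]
      simp only [map_add, LinearMap.add_apply, add_smul]
      abel }

/-- the Lie algebra structure on `Wsub`. -/
def lieAlgW (s : Setup B Z X) : @LieAlgebra F (Wsub B Z X) _ s.lieRingW :=
  letI := s.lieRingW
  { (inferInstance : Module F (Wsub B Z X)) with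
    lie_smul := by
      intro t x y
      apply Subtype.ext
      show (s.bra x (t • y) : g) = t • (s.bra x y : g)
      simp only [bra_val, SetLike.val_smul, lie_smul, map_smul, LinearMap.smul_apply,
        smul_eq_mul, smul_sub, smul_smul]
  }

/-- the derivation `D = ad(X)` on `Wsub`. -/
def Dmap (s : Setup B Z X) : Wsub B Z X →ₗ[F] Wsub B Z X where
  toFun x := ⟨⁅X, (x : g)⁆, s.DMem _⟩
  map_add' x y := by apply Subtype.ext; simp [lie_add]
  map_smul' t x := by apply Subtype.ext; simp [lie_smul]

lemma Dmap_val (s : Setup B Z X) (x : Wsub B Z X) : (s.Dmap x : g) = ⁅X, (x : g)⁆ := rfl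

end Setup

/-- the restricted bilinear form. -/
def BW (B : LinearMap.BilinForm F g) (Z X : g) : LinearMap.BilinForm F (Wsub B Z X) :=
  B.compl₁₂ (Wsub B Z X).subtype (Wsub B Z X).subtype

lemma BW_apply {x y : Wsub B Z X} : BW B Z X x y = B (x : g) (y : g) := rfl

namespace Setup

/-- the span of `Z` is a Lie ideal. -/
def Zideal (s : Setup B Z X) : LieIdeal F g :=
  { Submodule.span F ({Z} : Set g) with
    lie_mem := by
      intro x m hm
      have hm' : m ∈ Submodule.span F ({Z} : Set g) := hm
      obtain ⟨c, rfl⟩ := Submodule.mem_span_singleton.mp hm'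
      show ⁅x, c • Z⁆ ∈ Submodule.span F ({Z} : Set g)
      rw [lie_smul, s.liez, smul_zero]
      exact Submodule.zero_mem _ }

lemma inter_eq (s : Setup B Z X) {y : g} (hy : y ∈ Wsub B Z X)
    (hz : y ∈ Submodule.span F ({Z} : Set g)) : y = 0 := by
  obtain ⟨c, rfl⟩ := Submodule.mem_span_singleton.mp hz
  have h1 : B (c • Z) X = 0 := hy.1
  rw [map_smul, LinearMap.smul_apply, s.zx, smul_eq_mul, mul_one] at h1
  rw [h1, zero_smul]

/-- the natural quotient map as a Lie algebra morphism. -/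
def mkLie (s : Setup B Z X) : g →ₗ⁅F⁆ g ⧸ s.Zideal :=
  { (s.Zideal : Submodule F g).mkQ with map_lie' := rfl }

lemma solvW (s : Setup B Z X) (_hg : LieAlgebra.IsSolvable g) :
    @LieAlgebra.IsSolvable (Wsub B Z X) s.lieRingW := by
  letI := s.lieRingW
  letI := s.lieAlgW
  haveI : LieAlgebra.IsSolvable (g ⧸ s.Zideal) := by
    have hsurj : Function.Surjective s.mkLie := Submodule.mkQ_surjective _
    exact hsurj.lieAlgebra_isSolvable
  let φ : Wsub B Z X →ₗ⁅F⁆ g ⧸ s.Zideal :=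
    { toLinearMap := (s.Zideal : Submodule F g).mkQ ∘ₗ (Wsub B Z X).subtype
      map_lie' := by
        intro x y
        show LieSubmodule.Quotient.mk (N := s.Zideal) ((s.bra x y : g)) =
          ⁅LieSubmodule.Quotient.mk (N := s.Zideal) ((x : g)),
           LieSubmodule.Quotient.mk (N := s.Zideal) ((y : g))⁆
        rw [← LieSubmodule.Quotient.mk_bracket]
        show Submodule.Quotient.mk _ = Submodule.Quotient.mk _
        rw [Submodule.Quotient.eq, bra_val]
        have : (⁅(x : g), (y : g)⁆ - (B ⁅(x : g), (y : g)⁆ X) • Z) - ⁅(x : g), (y : g)⁆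
            = -((B ⁅(x : g), (y : g)⁆ X) • Z) := by abel
        rw [this]
        exact Submodule.neg_mem _
          (Submodule.smul_mem _ _ (Submodule.mem_span_singleton_self Z)) }
  have hinj : Function.Injective φ := by
    intro a b hab
    have h0 : Submodule.Quotient.mk ((a : g)) = (Submodule.Quotient.mk ((b : g)) :
        g ⧸ (s.Zideal : Submodule F g)) := hab
    rw [Submodule.Quotient.eq] at h0
    have := s.inter_eq (Submodule.sub_mem _ a.2 b.2) h0
    exact Subtype.ext (sub_eq_zero.mp this)
  exact hinj.lieAlgebra_isSolvable

lemma nondegW (s : Setup B Z X) : (BW B Z X).Nondegenerate := by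
  have hl : (BW B Z X).SeparatingLeft := by
    intro x hx
    apply Subtype.ext
    show (x : g) = 0
    apply s.nondeg.1
    intro v
    have hw := hx ⟨v - (B v Z) • X - (B v X) • Z, s.projMem v⟩
    rw [BW_apply] at hw
    rw [map_sub, map_sub, map_smul, map_smul] at hw
    rw [x.2.1, x.2.2] at hw
    simpa using hw
  refine ⟨hl, fun x hx => hl x fun y => ?_⟩
  rw [BW_apply, s.symm]
  exact hx y

lemma finrankW (s : Setup B Z X) [Module.Finite F g] :
    Module.finrank F (Wsub B Z X) = Module.finrank F g - 2 := by
  classical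
  let l : g →ₗ[F] F × F := LinearMap.prod (B.flip X) (B.flip Z)
  have hker : LinearMap.ker l = Wsub B Z X := by
    ext y
    simp [l, LinearMap.mem_ker, Prod.ext_iff, mem_Wsub]
  have hsurj : Function.Surjective l := by
    rintro ⟨a, b⟩
    refine ⟨a • Z + b • X, ?_⟩
    simp [l, Prod.ext_iff, s.zx, s.zz, s.xx, s.xz]
  have h := l.finrank_range_add_finrank_ker
  rw [LinearMap.range_eq_top.mpr hsurj, hker] at h
  have h2 : Module.finrank F (⊤ : Submodule F (F × F)) = 2 := by
    simp [Module.finrank_prod]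
  omega

end Setup

end Stmt14Aux


open Stmt14Aux

/-- a solvable quadratic Lie algebra `(g,B)` with a nonzero isotropic central
element `Z`, and `X` isotropic with `B(Z,X) = 1`, is a double extension of the solvable
quadratic Lie algebra `h = (F X ⊕ F Z)^⊥` (of dimension `dim g − 2`, with bracket the
projection of the bracket of `g` along `F Z`) by means of the skew-symmetric derivation
`D = p ∘ ad(X)|_h`. -/
theorem stmt_14 {F : Type u} [Field F] [CharZero F] {g : Type v} [LieRing g]
    [LieAlgebra F g] [Module.Finite F g] (B : LinearMap.BilinForm F g)
    (hq : IsQuadratic B) (hsol : LieAlgebra.IsSolvable g)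
    (Z X : g) (hZne : Z ≠ 0) (hZcentral : Z ∈ LieAlgebra.center F g)
    (hZiso : B Z Z = 0) (hXiso : B X X = 0) (hZX : B Z X = 1) :
    ∃ (hd : QuadLieData.{u, v} F) (D : hd.carrier →ₗ[F] hd.carrier)
      (ι : hd.carrier →ₗ[F] g),
      IsQuadratic hd.form ∧
      LieAlgebra.IsSolvable hd.carrier ∧
      Module.Finite F hd.carrier ∧
      finrank F hd.carrier = finrank F g - 2 ∧
      IsSkewDerivation hd.form D ∧
      Set.range (⇑ι) = {y : g | B y X = 0 ∧ B y Z = 0} ∧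
      IsDoubleExtension hd.form B D ι X Z := by
  obtain ⟨hnd, hsymm, hinv⟩ := hq
  have zlie : ∀ y : g, ⁅Z, y⁆ = 0 := by
    intro y
    rw [← lie_skew, (LieModule.mem_maxTrivSubmodule F g g Z).mp hZcentral y, neg_zero]
  have half : ∀ a : F, a = -a → a = 0 := by
    intro a ha
    have h2 : (2 : F) * a = 0 := by rw [two_mul]; nth_rewrite 1 [ha]; exact neg_add_cancel a
    rcases mul_eq_zero.mp h2 with h | h
    · exact absurd h two_ne_zero
    · exact h
  have s : Setup B Z X := ⟨hnd, hsymm, hinv, zlie, hZiso, hXiso, hZX, half⟩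
  letI instW : LieRing ↥(Wsub B Z X) := s.lieRingW
  letI instWA : LieAlgebra F ↥(Wsub B Z X) := s.lieAlgW
  refine ⟨{ carrier := ↥(Wsub B Z X), instLieRing := s.lieRingW,
            instLieAlgebra := s.lieAlgW, form := BW B Z X },
          s.Dmap, (Wsub B Z X).subtype, ⟨?_, ?_, ?_⟩, ?_, ?_, ?_, ⟨?_, ?_⟩, ?_, ?_⟩
  · exact s.nondegW
  · exact fun x y => hsymm (x : g) (y : g)
  · intro x y z
    show B ((s.bra x y : g)) (z : g) = B (x : g) ((s.bra y z : g))
    have hz : B Z (z : g) = 0 := by rw [hsymm]; exact z.2.2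
    have hx : B (x : g) Z = 0 := x.2.2
    simp only [Setup.bra_val, map_sub, map_smul, LinearMap.sub_apply,
      LinearMap.smul_apply, hz, hx, smul_eq_mul, mul_zero, sub_zero]
    exact hinv _ _ _
  · exact s.solvW hsol
  · exact inferInstanceAs (Module.Finite F (Wsub B Z X))
  · exact s.finrankW
  · intro x y
    apply Subtype.ext
    show ⁅X, (s.bra x y : g)⁆ = (s.bra (s.Dmap x) y : g) + (s.bra x (s.Dmap y) : g)
    have key : ⁅X, ⁅(x : g), (y : g)⁆⁆
        = ⁅⁅X, (x : g)⁆, (y : g)⁆ + ⁅(x : g), ⁅X, (y : g)⁆⁆ := leibniz_lie _ _ _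
    have hsum : B ⁅⁅X, (x : g)⁆, (y : g)⁆ X + B ⁅(x : g), ⁅X, (y : g)⁆⁆ X = 0 := by
      have h := s.bXX ⁅(x : g), (y : g)⁆
      rw [key] at h
      simpa [map_add] using h
    rw [Setup.bra_val, Setup.bra_val, Setup.bra_val, Setup.Dmap_val, Setup.Dmap_val]
    rw [lie_sub, lie_smul, s.liez, smul_zero, sub_zero, key, sub_add_sub_comm,
      ← add_smul, hsum, zero_smul, sub_zero]
  · intro x y
    show B ⁅X, (x : g)⁆ (y : g) = - B (x : g) ⁅X, (y : g)⁆
    rw [← s.inv (x : g) X (y : g)]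
    have hsk : ⁅(x : g), X⁆ = -⁅X, (x : g)⁆ := by rw [← lie_skew X (x : g), neg_neg]
    rw [hsk, map_neg, LinearMap.neg_apply, neg_neg]
  · ext y
    constructor
    · rintro ⟨w, rfl⟩; exact w.2
    · intro hy; exact ⟨⟨y, hy⟩, rfl⟩
  · refine ⟨Subtype.val_injective, ?_, ?_, ?_, ?_, ?_, ?_, ?_, hXiso, hZiso, s.xz⟩
    · intro v
      refine ⟨⟨v - (B v Z) • X - (B v X) • Z, s.projMem v⟩, B v Z, B v X, ?_⟩
      show v = (v - (B v Z) • X - (B v X) • Z) + (B v Z) • X + (B v X) • Z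
      abel
    · intro x y
      show ⁅(x : g), (y : g)⁆ = (s.bra x y : g) + (BW B Z X (s.Dmap x) y) • Z
      have hco : BW B Z X (s.Dmap x) y = B ⁅(x : g), (y : g)⁆ X := by
        rw [BW_apply]
        exact s.bX _ _
      rw [Setup.bra_val, hco, sub_add_cancel]
    · intro x; rfl
    · intro v; exact zlie v
    · intro x y; rfl
    · intro x; exact x.2.1
    · intro x; exact x.2.2
end
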